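/- arXiv:2502.08402 — 7 statements merged into one kernel-verified Lean document; each statement's English description precedes it below -/
import Mathlib

section
/- For any ψ₁, ψ₂ ∈ B^Z(𝔻), the product ψ₁′ψ₂′ belongs to A^Z_0(𝔻); that is, sup_{|z|<1} (1−|z|²)|ψ₁′(z)ψ₂′(z)| < ∞ and lim_{t→0} sup_{1−t<|z|<1} (1−|z|²)|ψ₁′(z)ψ₂′(z)| = 0. -/
open Metric

/-- `ψ ∈ B^Z(𝔻)`: holomorphic on the unit disk with
`‖ψ‖_{B^Z} = |ψ′(0)| + sup_{|z|<1} (1−|z|²)|ψ″(z)| < ∞`. -/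
def memBZ (ψ : ℂ → ℂ) : Prop :=
  DifferentiableOn ℂ ψ (ball (0:ℂ) 1) ∧
  ∃ C : ℝ, ∀ z ∈ ball (0:ℂ) 1,
    (1 - ‖z‖ ^ 2) * ‖deriv (deriv ψ) z‖ ≤ C

open intervalIntegral in
lemma deriv_bound (ψ : ℂ → ℂ)
    (hdiff : DifferentiableOn ℂ ψ (ball (0:ℂ) 1))
    (C : ℝ) (hC : ∀ z ∈ ball (0:ℂ) 1,
      (1 - ‖z‖ ^ 2) * ‖deriv (deriv ψ) z‖ ≤ C) :
    ∀ z ∈ ball (0:ℂ) 1,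
      ‖deriv ψ z‖ ≤
        (‖deriv ψ 0‖ + 4 * C) * (1 - ‖z‖) ^ (-(1/4) : ℝ) := by
  have hC0 : 0 ≤ C := by
    have h := hC 0 (by simp)
    simp only [norm_zero] at h
    nlinarith [norm_nonneg (deriv (deriv ψ) 0)]
  have hA : AnalyticOnNhd ℂ ψ (ball 0 1) := hdiff.analyticOnNhd isOpen_ball
  have hd1 : AnalyticOnNhd ℂ (deriv ψ) (ball 0 1) := hA.deriv
  intro z hz
  set r := ‖z‖ with hrdef
  have hr1 : r < 1 := by simpa [hrdef, Complex.dist_eq] using hz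
  have hr0 : 0 ≤ r := norm_nonneg z
  set g : ℝ → ℂ := fun t => deriv ψ ((t:ℂ) * z) with hgdef
  set g' : ℝ → ℂ := fun t => deriv (deriv ψ) ((t:ℂ) * z) * z with hg'def
  have huIcc : Set.uIcc (0:ℝ) 1 = Set.Icc 0 1 := Set.uIcc_of_le (by norm_num)
  have hmem : ∀ t ∈ Set.uIcc (0:ℝ) 1, ((t:ℂ) * z) ∈ ball (0:ℂ) 1 := by
    intro t ht
    rw [huIcc] at ht
    simp only [mem_ball, Complex.dist_eq, sub_zero, norm_mul, Complex.norm_real,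
      Real.norm_eq_abs, abs_of_nonneg ht.1]
    nlinarith [ht.2, ht.1]
  have hg : ∀ t ∈ Set.uIcc (0:ℝ) 1, HasDerivAt g (g' t) t := by
    intro t ht
    have hw := hmem t ht
    have h2 : HasDerivAt (deriv ψ) (deriv (deriv ψ) ((t:ℂ)*z)) ((t:ℂ)*z) :=
      (hd1 _ hw).differentiableAt.hasDerivAt
    have hinner : HasDerivAt (fun w : ℂ => w * z) z ((t:ℂ)) := by
      simpa using (hasDerivAt_id ((t:ℂ))).mul_const z
    have hcomp := HasDerivAt.comp ((t:ℂ)) h2 hinner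
    simpa [hgdef, hg'def, Function.comp] using hcomp.comp_ofReal
  have hu : ∀ t ∈ Set.uIcc (0:ℝ) 1, 0 < 1 - t * r := by
    intro t ht
    rw [huIcc] at ht
    nlinarith [ht.1, ht.2]
  -- continuity of g'
  have hmap : Set.MapsTo (fun t : ℝ => (t:ℂ) * z) (Set.uIcc 0 1) (ball (0:ℂ) 1) := hmem
  have hg'cont : ContinuousOn g' (Set.uIcc 0 1) := by
    have h1 : ContinuousOn (deriv (deriv ψ)) (ball (0:ℂ) 1) :=
      (hd1.deriv).continuousOn
    exact ((h1.comp (Continuous.continuousOn (by continuity)) hmap).mul continuousOn_const)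
  have hint : IntervalIntegrable g' MeasureTheory.volume 0 1 := hg'cont.intervalIntegrable
  -- bound function
  set b : ℝ → ℝ := fun t => C * (r * (1 - t * r) ^ (-(5/4) : ℝ)) with hbdef
  have hbcont : ContinuousOn b (Set.uIcc 0 1) := by
    apply ContinuousOn.mul continuousOn_const
    apply ContinuousOn.mul continuousOn_const
    exact ContinuousOn.rpow_const
      (by fun_prop) (fun t ht => Or.inl (ne_of_gt (hu t ht)))
  have hbint : IntervalIntegrable b MeasureTheory.volume 0 1 := hbcont.intervalIntegrable
  -- a.e. bound
  have hae : ∀ᵐ t ∂(MeasureTheory.volume.restrict (Set.uIoc (0:ℝ) 1)), ‖g' t‖ ≤ b t := by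
    filter_upwards [MeasureTheory.ae_restrict_mem measurableSet_uIoc] with t ht
    have ht' : t ∈ Set.uIcc (0:ℝ) 1 := Set.uIoc_subset_uIcc ht
    have ht'' : t ∈ Set.Icc (0:ℝ) 1 := huIcc ▸ ht'
    have hw := hmem t ht'
    have habs : ‖(t:ℂ) * z‖ = t * r := by
      simp [norm_mul, Complex.norm_real, abs_of_nonneg ht''.1, hrdef]
    have h1 := hC _ hw
    rw [habs] at h1
    have h2 : 0 < 1 - t * r := hu t ht'
    have h3 : 1 - t * r ≤ 1 - (t*r)^2 := by
      nlinarith [mul_nonneg (mul_nonneg ht''.1 hr0) (le_of_lt h2)]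
    have h4 : ‖deriv (deriv ψ) ((t:ℂ)*z)‖ * (1 - t*r) ≤ C := by
      nlinarith [norm_nonneg (deriv (deriv ψ) ((t:ℂ)*z))]
    have h5 : ‖deriv (deriv ψ) ((t:ℂ)*z)‖ ≤ C * (1 - t*r)⁻¹ := by
      rw [← div_eq_mul_inv]
      exact (le_div_iff₀ h2).mpr h4
    have h6 : (1 - t*r)⁻¹ ≤ (1 - t*r) ^ (-(5/4) : ℝ) := by
      rw [← Real.rpow_neg_one]
      exact Real.rpow_le_rpow_of_exponent_ge h2 (by nlinarith [ht''.1, hr0]) (by norm_num)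
    calc ‖g' t‖ = ‖deriv (deriv ψ) ((t:ℂ)*z)‖ * r := by
          simp [hg'def, norm_mul, hrdef]
      _ ≤ (C * (1 - t*r)⁻¹) * r := by
          apply mul_le_mul_of_nonneg_right h5 hr0
      _ ≤ b t := by
          rw [hbdef]
          have : 0 ≤ (1 - t*r)⁻¹ := le_of_lt (inv_pos.mpr h2)
          nlinarith [mul_le_mul_of_nonneg_left h6 hC0, Real.rpow_nonneg (le_of_lt h2) (-(5/4):ℝ)]
  -- FTC for g
  have hftc : ∫ t in (0:ℝ)..1, g' t = g 1 - g 0 := integral_eq_sub_of_hasDerivAt hg hint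
  -- FTC for b (antiderivative H)
  set H : ℝ → ℝ := fun t => C * (4 * (1 - t * r) ^ (-(1/4) : ℝ)) with hHdef
  have hH : ∀ t ∈ Set.uIcc (0:ℝ) 1, HasDerivAt H (b t) t := by
    intro t ht
    have h2 := hu t ht
    have hin : HasDerivAt (fun s : ℝ => 1 - s * r) (-(1 * r)) t :=
      ((hasDerivAt_id t).mul_const r).const_sub 1
    have hpow := (Real.hasDerivAt_rpow_const (x := 1 - t*r) (p := (-(1/4):ℝ))
      (Or.inl (ne_of_gt h2))).comp t hin
    have := (hpow.const_mul (4:ℝ)).const_mul C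
    refine HasDerivAt.congr_deriv this ?_
    rw [hbdef]
    have he : (-(1/4) : ℝ) - 1 = -(5/4) := by norm_num
    rw [he]
    ring
  have hbftc : ∫ t in (0:ℝ)..1, b t = H 1 - H 0 := integral_eq_sub_of_hasDerivAt hH hbint
  have hnorm : ‖g 1 - g 0‖ ≤ |∫ t in (0:ℝ)..1, b t| :=
    hftc ▸ norm_integral_le_abs_of_norm_le hae hbint
  have hHval : H 1 - H 0 = C * (4 * (1 - r) ^ (-(1/4):ℝ)) - 4 * C := by
    simp [hHdef, Real.one_rpow]
    ring
  have hXone : (1:ℝ) ≤ (1 - r) ^ (-(1/4):ℝ) :=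
    Real.one_le_rpow_of_pos_of_le_one_of_nonpos (by linarith) (by linarith) (by norm_num)
  have hH10 : |∫ t in (0:ℝ)..1, b t| = H 1 - H 0 := by
    rw [hbftc, hHval]
    rw [abs_of_nonneg]
    nlinarith
  have hg1 : g 1 = deriv ψ z := by simp [hgdef]
  have hg0 : g 0 = deriv ψ 0 := by simp [hgdef]
  have : ‖deriv ψ z‖ ≤ ‖deriv ψ 0‖ + (H 1 - H 0) := by
    have h := norm_sub_norm_le (g 1) (g 0)
    rw [hH10] at hnorm
    simp only [hg1, hg0] at h hnorm
    linarith
  rw [hHval] at this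
  nlinarith [norm_nonneg (deriv ψ 0)]

/-- for `ψ₁, ψ₂ ∈ B^Z(𝔻)`, the product `ψ₁′ψ₂′` belongs to
`A^Z_0(𝔻)`: its `A^Z`-sup is finite and
`lim_{t→0} sup_{1−t<|z|<1} (1−|z|²)|ψ₁′(z)ψ₂′(z)| = 0`. -/
theorem deriv_mul_deriv_mem_littleAZ (ψ₁ ψ₂ : ℂ → ℂ)
    (h₁ : memBZ ψ₁) (h₂ : memBZ ψ₂) :
    (∃ C : ℝ, ∀ z ∈ ball (0:ℂ) 1,
      (1 - ‖z‖ ^ 2) * ‖deriv ψ₁ z * deriv ψ₂ z‖ ≤ C) ∧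
    (∀ ε : ℝ, 0 < ε → ∃ t : ℝ, 0 < t ∧ ∀ z : ℂ,
      1 - t < ‖z‖ → ‖z‖ < 1 →
        (1 - ‖z‖ ^ 2) * ‖deriv ψ₁ z * deriv ψ₂ z‖ ≤ ε) := by
  obtain ⟨hd₁, C₁, hC₁⟩ := h₁
  obtain ⟨hd₂, C₂, hC₂⟩ := h₂
  have hC₁0 : 0 ≤ C₁ := by
    have h := hC₁ 0 (by simp); simp only [norm_zero] at h
    nlinarith [norm_nonneg (deriv (deriv ψ₁) 0)]
  have hC₂0 : 0 ≤ C₂ := by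
    have h := hC₂ 0 (by simp); simp only [norm_zero] at h
    nlinarith [norm_nonneg (deriv (deriv ψ₂) 0)]
  set D₁ : ℝ := ‖deriv ψ₁ 0‖ + 4 * C₁ with hD₁def
  set D₂ : ℝ := ‖deriv ψ₂ 0‖ + 4 * C₂ with hD₂def
  have hD₁0 : 0 ≤ D₁ := by positivity
  have hD₂0 : 0 ≤ D₂ := by positivity
  have hb₁ := deriv_bound ψ₁ hd₁ C₁ hC₁
  have hb₂ := deriv_bound ψ₂ hd₂ C₂ hC₂
  set E : ℝ := 2 * D₁ * D₂ with hEdef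
  have hE0 : 0 ≤ E := by positivity
  have key : ∀ z ∈ ball (0:ℂ) 1,
      (1 - ‖z‖ ^ 2) * ‖deriv ψ₁ z * deriv ψ₂ z‖ ≤
        E * (1 - ‖z‖) ^ ((1/2 : ℝ)) := by
    intro z hz
    set r := ‖z‖ with hrdef
    have hr1 : r < 1 := by simpa [hrdef, Complex.dist_eq] using hz
    have hr0 : 0 ≤ r := norm_nonneg z
    set s : ℝ := 1 - r with hsdef
    have hs : 0 < s := by simp [hsdef]; linarith
    have e1 := hb₁ z hz
    have e2 := hb₂ z hz
    have hp : 0 ≤ s ^ (-(1/4) : ℝ) := Real.rpow_nonneg hs.le _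
    have m1 : ‖deriv ψ₁ z‖ * ‖deriv ψ₂ z‖ ≤
        (D₁ * s ^ (-(1/4):ℝ)) * (D₂ * s ^ (-(1/4):ℝ)) :=
      mul_le_mul e1 e2 (norm_nonneg _) (by positivity)
    have m2 : 1 - r ^ 2 ≤ 2 * s := by rw [hsdef]; nlinarith
    have m3 : (1 - r ^ 2) * ‖deriv ψ₁ z * deriv ψ₂ z‖ ≤
        (2 * s) * ((D₁ * s ^ (-(1/4):ℝ)) * (D₂ * s ^ (-(1/4):ℝ))) := by
      rw [norm_mul]
      apply mul_le_mul m2 m1 (by positivity) (by positivity)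
    have hsum : s * (s ^ (-(1/4):ℝ) * s ^ (-(1/4):ℝ)) = s ^ ((1/2):ℝ) := by
      rw [← Real.rpow_add hs]
      nth_rewrite 1 [← Real.rpow_one s]
      rw [← Real.rpow_add hs]
      norm_num
    calc (1 - r ^ 2) * ‖deriv ψ₁ z * deriv ψ₂ z‖
        ≤ (2 * s) * ((D₁ * s ^ (-(1/4):ℝ)) * (D₂ * s ^ (-(1/4):ℝ))) := m3
      _ = E * (s * (s ^ (-(1/4):ℝ) * s ^ (-(1/4):ℝ))) := by rw [hEdef]; ring
      _ = E * s ^ ((1/2):ℝ) := by rw [hsum]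
  constructor
  · refine ⟨E, fun z hz => ?_⟩
    refine (key z hz).trans ?_
    have hr1 : ‖z‖ < 1 := by simpa [Complex.dist_eq] using hz
    have hr0 : 0 ≤ ‖z‖ := norm_nonneg z
    have : (1 - ‖z‖) ^ ((1/2):ℝ) ≤ 1 :=
      Real.rpow_le_one (by linarith) (by linarith) (by norm_num)
    nlinarith
  · intro ε hε
    refine ⟨min 1 ((ε / (E + 1)) ^ 2), lt_min one_pos (by positivity), fun z hz1 hz2 => ?_⟩
    have hzball : z ∈ ball (0:ℂ) 1 := by
      simp [mem_ball, Complex.dist_eq]; exact hz2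
    refine (key z hzball).trans ?_
    have hr0 : 0 ≤ ‖z‖ := norm_nonneg z
    have hslt : 1 - ‖z‖ ≤ (ε / (E + 1)) ^ 2 := by
      have := min_le_right 1 ((ε / (E + 1)) ^ 2)
      linarith
    have hs0 : (0:ℝ) ≤ 1 - ‖z‖ := by linarith
    have hq : 0 < ε / (E + 1) := by positivity
    have h1 : (1 - ‖z‖) ^ ((1/2):ℝ) ≤ ((ε / (E + 1)) ^ 2) ^ ((1/2):ℝ) :=
      Real.rpow_le_rpow hs0 hslt (by norm_num)
    have h2 : ((ε / (E + 1)) ^ 2) ^ ((1/2):ℝ) = ε / (E + 1) := by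
      rw [← Real.rpow_natCast (ε / (E + 1)) 2, ← Real.rpow_mul hq.le]
      norm_num
    rw [h2] at h1
    have h3 : E * (1 - ‖z‖) ^ ((1/2):ℝ) ≤ E * (ε / (E + 1)) :=
      mul_le_mul_of_nonneg_left h1 hE0
    refine h3.trans ?_
    rw [div_eq_mul_inv, ← mul_assoc]
    rw [mul_comm E ε, mul_assoc]
    have h4 : E * (E + 1)⁻¹ ≤ 1 := by
      rw [← div_eq_mul_inv, div_le_one (by linarith)]; linarith
    nlinarith
end

section
/- The map Λ defined by Λ(ψ) = ψ″ − (ψ′)²/2 sends B^Z(𝔻) into A^Z(𝔻): for every ψ ∈ B^Z(𝔻), one has sup_{|z|<1} (1−|z|²)|ψ″(z) − ψ′(z)²/2| < ∞. -/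
open Metric

lemma deriv_growth (ψ : ℂ → ℂ) (hd : DifferentiableOn ℂ ψ (ball (0:ℂ) 1)) (C : ℝ)
    (hC : ∀ z ∈ ball (0:ℂ) 1,
      (1 - ‖z‖ ^ 2) * ‖deriv (deriv ψ) z‖ ≤ C)
    (hC0 : 0 ≤ C) (z : ℂ) (hz : z ∈ ball (0:ℂ) 1) :
    ‖deriv ψ z‖ ≤
      ‖deriv ψ 0‖ + C * (-Real.log (1 - ‖z‖)) := by
  have han : AnalyticOnNhd ℂ ψ (ball (0:ℂ) 1) := hd.analyticOnNhd isOpen_ball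
  have hd' : AnalyticOnNhd ℂ (deriv ψ) (ball (0:ℂ) 1) := han.deriv
  set r : ℝ := ‖z‖ with hr
  have hr0 : 0 ≤ r := norm_nonneg z
  have hr1 : r < 1 := by simpa [hr, Complex.dist_eq] using hz
  -- inner map
  set h : ℝ → ℂ := fun t => (t : ℂ) * z with hh
  have hmem : ∀ t ∈ Set.Icc (0:ℝ) 1, h t ∈ ball (0:ℂ) 1 := by
    intro t ht
    simp only [mem_ball, Complex.dist_eq, sub_zero, hh, norm_mul, Complex.norm_real,
      Real.norm_eq_abs, abs_of_nonneg ht.1]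
    calc t * r ≤ 1 * r := by nlinarith [ht.2]
    _ < 1 := by simpa using hr1
  have hfc : ContinuousOn (fun t => deriv ψ (h t)) (Set.Icc (0:ℝ) 1) := by
    apply (hd'.continuousOn.comp (by fun_prop) hmem)
  have hf' : ∀ t ∈ Set.Ico (0:ℝ) 1,
      HasDerivWithinAt (fun t => deriv ψ (h t)) (z • deriv (deriv ψ) (h t)) (Set.Ici t) t := by
    intro t ht
    have hg : HasDerivAt (deriv ψ) (deriv (deriv ψ) (h t)) (h t) :=
      ((hd' _ (hmem t ⟨ht.1, ht.2.le⟩)).differentiableAt.hasDerivAt)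
    have hht : HasDerivAt h z t := by
      simpa using (HasDerivAt.mul_const (Complex.ofRealCLM.hasDerivAt (x := t)) z)
    exact (hg.scomp t hht).hasDerivWithinAt
  set B : ℝ → ℝ := fun t => ‖deriv ψ 0‖ + C * (-Real.log (1 - t * r)) with hB
  have hpos : ∀ t ∈ Set.Icc (0:ℝ) 1, 0 < 1 - t * r := by
    intro t ht
    nlinarith [ht.1, ht.2]
  have hBd : ∀ t ∈ Set.Ico (0:ℝ) 1, HasDerivAt B (C * (r / (1 - t * r))) t := by
    intro t ht
    have h1 : HasDerivAt (fun t : ℝ => 1 - t * r) (-r) t := by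
      simpa using ((hasDerivAt_id t).mul_const r).const_sub 1
    have h2 : HasDerivAt (fun t : ℝ => Real.log (1 - t * r)) ((1 - t * r)⁻¹ * -r) t :=
      by have := (Real.hasDerivAt_log (hpos t ⟨ht.1, ht.2.le⟩).ne').comp t h1; exact this
    have := ((h2.neg).const_mul C).const_add (‖deriv ψ 0‖)
    refine this.congr_deriv ?_
    ring
  have hBc : ContinuousOn B (Set.Icc (0:ℝ) 1) := by
    apply continuousOn_const.add (ContinuousOn.mul continuousOn_const _)
    apply ContinuousOn.neg
    apply ContinuousOn.log (by fun_prop)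
    exact fun t ht => (hpos t ht).ne'
  have bound : ∀ t ∈ Set.Ico (0:ℝ) 1,
      ‖z • deriv (deriv ψ) (h t)‖ ≤ C * (r / (1 - t * r)) := by
    intro t ht
    have htr : 0 < 1 - t * r := hpos t ⟨ht.1, ht.2.le⟩
    have htr2 : 0 < 1 - (t * r) ^ 2 := by nlinarith [ht.1, hr0, ht.2, hr1, mul_nonneg ht.1 hr0]
    have key := hC (h t) (hmem t ⟨ht.1, ht.2.le⟩)
    have habs : ‖h t‖ = t * r := by
      simp [hh, abs_of_nonneg ht.1, hr]
    rw [habs] at key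
    have h3 : ‖deriv (deriv ψ) (h t)‖ ≤ C / (1 - (t * r) ^ 2) := by
      rw [le_div_iff₀ htr2]; linarith [key]
    have h4 : C / (1 - (t * r) ^ 2) ≤ C / (1 - t * r) := by
      have hs : 0 ≤ t * r := mul_nonneg ht.1 hr0
      have hss : (t * r) ^ 2 ≤ t * r := by nlinarith [mul_nonneg hs htr.le]
      exact div_le_div_of_nonneg_left hC0 htr (by linarith)
    calc ‖z • deriv (deriv ψ) (h t)‖ = r * ‖deriv (deriv ψ) (h t)‖ := by
          simp [hr]
    _ ≤ r * (C / (1 - t * r)) := by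
          apply mul_le_mul_of_nonneg_left (h3.trans h4) hr0
    _ = C * (r / (1 - t * r)) := by ring
  have main := image_norm_le_of_norm_deriv_right_le_deriv_boundary' hfc hf'
    (B := B) (B' := fun t => C * (r / (1 - t * r)))
    (by simp [hh, hB]) hBc (fun t ht => (hBd t ht).hasDerivWithinAt) bound
  have := main (Set.right_mem_Icc.2 zero_le_one)
  simpa [hh, hB] using this


theorem lambda_maps_BZ_to_AZ' (ψ : ℂ → ℂ)
    (hd : DifferentiableOn ℂ ψ (ball (0:ℂ) 1)) (C : ℝ)
    (hC : ∀ z ∈ ball (0:ℂ) 1,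
      (1 - ‖z‖ ^ 2) * ‖deriv (deriv ψ) z‖ ≤ C)
    (hgrowth : ∀ z ∈ ball (0:ℂ) 1, ‖deriv ψ z‖ ≤
      ‖deriv ψ 0‖ + C * (-Real.log (1 - ‖z‖)))
    (hC0 : 0 ≤ C) :
    ∃ K : ℝ, ∀ z ∈ ball (0:ℂ) 1,
      (1 - ‖z‖ ^ 2) *
        ‖deriv (deriv ψ) z - (deriv ψ z) ^ 2 / 2‖ ≤ K := by
  set A := ‖deriv ψ 0‖ with hA
  have hA0 : 0 ≤ A := norm_nonneg _
  refine ⟨C + (2 * A ^ 2 + 8 * C ^ 2), fun z hz => ?_⟩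
  set r := ‖z‖ with hrdef
  have hr0 : 0 ≤ r := norm_nonneg z
  have hr1 : r < 1 := by simpa [Complex.dist_eq, hrdef] using hz
  have h1r : 0 < 1 - r := by linarith
  set L := -Real.log (1 - r) with hL
  have hL0 : 0 ≤ L := by
    have := Real.log_nonpos (x := 1 - r) (by linarith) (by linarith)
    simp only [hL]; linarith
  -- (1-r) L² ≤ 4
  have hLsq : (1 - r) * L ^ 2 ≤ 4 := by
    have h2 : L = Real.log ((1 - r)⁻¹) := by rw [Real.log_inv]
    have h3 : L = 2 * Real.log (Real.sqrt ((1 - r)⁻¹)) := by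
      rw [h2, Real.log_sqrt (by positivity)]; ring
    have h4 : Real.log (Real.sqrt ((1 - r)⁻¹)) ≤ Real.sqrt ((1 - r)⁻¹) - 1 :=
      Real.log_le_sub_one_of_pos (by positivity)
    have h5 : L ≤ 2 * Real.sqrt ((1 - r)⁻¹) := by
      rw [h3]; nlinarith [Real.sqrt_nonneg ((1 - r)⁻¹)]
    have h6 : L ^ 2 ≤ (2 * Real.sqrt ((1 - r)⁻¹)) ^ 2 :=
      pow_le_pow_left₀ hL0 h5 2
    have h7 : (2 * Real.sqrt ((1 - r)⁻¹)) ^ 2 = 4 * (1 - r)⁻¹ := by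
      rw [mul_pow, Real.sq_sqrt (by positivity)]; norm_num
    have h8 : L ^ 2 ≤ 4 * (1 - r)⁻¹ := h7 ▸ h6
    calc (1 - r) * L ^ 2 ≤ (1 - r) * (4 * (1 - r)⁻¹) :=
          mul_le_mul_of_nonneg_left h8 h1r.le
    _ = 4 := by field_simp
  have hr2 : 0 ≤ 1 - r ^ 2 := by nlinarith
  have hder : ‖deriv ψ z‖ ≤ A + C * L := hgrowth z hz
  have hsq : ‖deriv ψ z‖ ^ 2 ≤ (A + C * L) ^ 2 :=
    pow_le_pow_left₀ (norm_nonneg _) hder 2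
  -- triangle inequality
  have tri : ‖deriv (deriv ψ) z - (deriv ψ z) ^ 2 / 2‖ ≤
      ‖deriv (deriv ψ) z‖ + ‖deriv ψ z‖ ^ 2 / 2 := by
    have t1 : ‖deriv (deriv ψ) z - (deriv ψ z) ^ 2 / 2‖ ≤
        ‖deriv (deriv ψ) z‖ + ‖(deriv ψ z) ^ 2 / 2‖ := norm_sub_le _ _
    have t2 : ‖(deriv ψ z) ^ 2 / 2‖ = ‖deriv ψ z‖ ^ 2 / 2 := by
      rw [norm_div, norm_pow]; norm_num
    linarith [t1, t2.le]
  have term1 : (1 - r ^ 2) * ‖deriv (deriv ψ) z‖ ≤ C := hC z hz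
  -- bound the square term
  have e1 : (A + C * L) ^ 2 ≤ 2 * A ^ 2 + 2 * C ^ 2 * L ^ 2 := by
    nlinarith [sq_nonneg (A - C * L)]
  have e3 : (1 - r ^ 2) * (A + C * L) ^ 2 ≤ (2 * (1 - r)) * (2 * A ^ 2 + 2 * C ^ 2 * L ^ 2) := by
    apply mul_le_mul (by nlinarith) e1 (by positivity) (by linarith)
  have e5 : (2 * (1 - r)) * (2 * A ^ 2 + 2 * C ^ 2 * L ^ 2) ≤ 4 * A ^ 2 + 16 * C ^ 2 := by
    have := mul_le_mul_of_nonneg_left hLsq (by positivity : (0:ℝ) ≤ 4 * C ^ 2)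
    nlinarith [sq_nonneg A, sq_nonneg C, mul_nonneg h1r.le (sq_nonneg L)]
  have term2 : (1 - r ^ 2) * ‖deriv ψ z‖ ^ 2 ≤ 4 * A ^ 2 + 16 * C ^ 2 := by
    calc (1 - r ^ 2) * ‖deriv ψ z‖ ^ 2
        ≤ (1 - r ^ 2) * (A + C * L) ^ 2 := mul_le_mul_of_nonneg_left hsq hr2
    _ ≤ _ := e3.trans e5
  calc (1 - r ^ 2) * ‖deriv (deriv ψ) z - (deriv ψ z) ^ 2 / 2‖
      ≤ (1 - r ^ 2) * (‖deriv (deriv ψ) z‖ + ‖deriv ψ z‖ ^ 2 / 2) :=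
        mul_le_mul_of_nonneg_left tri hr2
  _ = (1 - r ^ 2) * ‖deriv (deriv ψ) z‖
      + (1 - r ^ 2) * ‖deriv ψ z‖ ^ 2 / 2 := by ring
  _ ≤ C + (2 * A ^ 2 + 8 * C ^ 2) := by linarith [term1, term2]

/-- the map `Λ(ψ) = ψ″ − (ψ′)²/2` sends `B^Z(𝔻)` into `A^Z(𝔻)`:
for every `ψ ∈ B^Z(𝔻)`, `sup_{|z|<1} (1−|z|²)|ψ″(z) − ψ′(z)²/2| < ∞`. -/
theorem lambda_maps_BZ_to_AZ (ψ : ℂ → ℂ) (hψ : memBZ ψ) :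
    ∃ C : ℝ, ∀ z ∈ ball (0:ℂ) 1,
      (1 - ‖z‖ ^ 2) *
        ‖deriv (deriv ψ) z - (deriv ψ z) ^ 2 / 2‖ ≤ C := by
  obtain ⟨hd, C, hC⟩ := hψ
  have hC0 : 0 ≤ C := by
    have h0 := hC 0 (mem_ball_self one_pos)
    have hpos : (0:ℝ) ≤ (1 - ‖(0:ℂ)‖ ^ 2) *
        ‖deriv (deriv ψ) 0‖ := by
      simp
    linarith
  exact lambda_maps_BZ_to_AZ' ψ hd C hC (fun z hz => deriv_growth ψ hd C hC hC0 z hz) hC0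
end

section
/- The map Λ(ψ) = ψ″ − (ψ′)²/2 sends B^Z_0(𝔻) into A^Z_0(𝔻): for every ψ ∈ B^Z_0(𝔻), one has lim_{t→0} sup_{1−t<|z|<1} (1−|z|²)|ψ″(z) − ψ′(z)²/2| = 0. -/
open Metric

/-- The little condition on the second derivative:
`lim_{t→0} sup_{1−t<|z|<1} (1−|z|²)|ψ″(z)| = 0`. -/
def littleBZ (ψ : ℂ → ℂ) : Prop :=
  ∀ ε : ℝ, 0 < ε → ∃ t : ℝ, 0 < t ∧ ∀ z : ℂ,
    1 - t < ‖z‖ → ‖z‖ < 1 →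
      (1 - ‖z‖ ^ 2) * ‖deriv (deriv ψ) z‖ ≤ ε


lemma tendstoAux (A C : ℝ) :
    Filter.Tendsto (fun s : ℝ => s * (A + C * Real.log s⁻¹) ^ 2)
      (nhdsWithin 0 (Set.Ioi 0)) (nhds 0) := by
  have h1 : Filter.Tendsto (fun s : ℝ => A * s ^ (1/2:ℝ) - C * (Real.log s * s ^ (1/2:ℝ)))
      (nhdsWithin 0 (Set.Ioi 0)) (nhds 0) := by
    have h2 := tendsto_log_mul_rpow_nhdsGT_zero (r := 1/2) one_half_pos
    have h3 : Filter.Tendsto (fun s : ℝ => s ^ (1/2:ℝ)) (nhdsWithin 0 (Set.Ioi 0)) (nhds 0) := by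
      have := (Real.continuousAt_rpow_const 0 (1/2) (Or.inr (by norm_num : (0:ℝ) ≤ 1/2))).tendsto
      simp only [Real.zero_rpow (by norm_num : (1/2:ℝ) ≠ 0)] at this
      exact this.mono_left nhdsWithin_le_nhds
    simpa using ((h3.const_mul A).sub (h2.const_mul C))
  have h4 : Filter.Tendsto (fun s : ℝ =>
      (A * s ^ (1/2:ℝ) - C * (Real.log s * s ^ (1/2:ℝ))) ^ 2)
      (nhdsWithin 0 (Set.Ioi 0)) (nhds 0) := by
    simpa using h1.pow 2
  refine h4.congr' ?_
  filter_upwards [self_mem_nhdsWithin] with s hs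
  have hs' : (0:ℝ) < s := hs
  have hsq : (s ^ (1/2:ℝ)) ^ 2 = s := by
    rw [← Real.rpow_natCast (s ^ (1/2:ℝ)) 2, ← Real.rpow_mul hs'.le]
    norm_num
  rw [Real.log_inv]
  ring_nf
  rw [hsq]; ring

lemma derivBound (ψ : ℂ → ℂ) (hd : DifferentiableOn ℂ ψ (ball (0:ℂ) 1))
    (C : ℝ)
    (hC : ∀ w ∈ ball (0:ℂ) 1, (1 - ‖w‖ ^ 2) * ‖deriv (deriv ψ) w‖ ≤ C)
    (z : ℂ) (hz : ‖z‖ < 1) :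
    ‖deriv ψ z‖ ≤ ‖deriv ψ 0‖ +
      C * Real.log (1 - ‖z‖)⁻¹ := by
  set r := ‖z‖ with hr
  have hr0 : 0 ≤ r := norm_nonneg z
  have hA : AnalyticOnNhd ℂ (deriv ψ) (ball (0:ℂ) 1) :=
    (hd.analyticOnNhd isOpen_ball).deriv
  have hA2 : AnalyticOnNhd ℂ (deriv (deriv ψ)) (ball (0:ℂ) 1) := hA.deriv
  have hmem : ∀ t ∈ Set.Icc (0:ℝ) 1, (t • z) ∈ ball (0:ℂ) 1 := by
    intro t ht
    simp only [mem_ball, dist_zero_right, norm_smul, Real.norm_eq_abs,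
      abs_of_nonneg ht.1]
    calc t * r ≤ 1 * r := by nlinarith [ht.2]
    _ < 1 := by simpa using hz
  have habs : ∀ t ∈ Set.Icc (0:ℝ) 1, ‖t • z‖ = t * r := by
    intro t ht
    rw [norm_smul, Real.norm_eq_abs, abs_of_nonneg ht.1]
  have hder : ∀ t ∈ Set.uIcc (0:ℝ) 1,
      HasDerivAt (fun t : ℝ => deriv ψ (t • z)) (z * deriv (deriv ψ) (t • z)) t := by
    intro t ht
    rw [Set.uIcc_of_le zero_le_one] at ht
    have h1 : HasDerivAt (fun t : ℝ => t • z) z t := by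
      simpa using (hasDerivAt_id t).smul_const z
    have h2 : HasDerivAt (deriv ψ) (deriv (deriv ψ) (t • z)) (t • z) :=
      ((hA _ (hmem t ht)).differentiableAt).hasDerivAt
    exact h2.scomp t h1
  have hcont : ContinuousOn (fun t : ℝ => z * deriv (deriv ψ) (t • z)) (Set.uIcc (0:ℝ) 1) := by
    rw [Set.uIcc_of_le zero_le_one]
    refine ContinuousOn.mul continuousOn_const ?_
    exact hA2.continuousOn.comp (by fun_prop) hmem
  have hint : IntervalIntegrable (fun t : ℝ => z * deriv (deriv ψ) (t • z))
      MeasureTheory.volume 0 1 := hcont.intervalIntegrable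
  have key : ∫ t in (0:ℝ)..1, z * deriv (deriv ψ) (t • z)
      = deriv ψ z - deriv ψ 0 := by
    have := intervalIntegral.integral_eq_sub_of_hasDerivAt hder hint
    simpa using this
  -- the bound function
  have hC0 : 0 ≤ C := by
    have := hC 0 (by simp)
    simp at this
    exact le_trans (by positivity) this
  have hbpos : ∀ t ∈ Set.Icc (0:ℝ) 1, (0:ℝ) < 1 - t * r := by
    intro t ht
    have : t * r < 1 := lt_of_le_of_lt (by nlinarith [ht.2]) hz
    linarith
  have hbcont : ContinuousOn (fun t : ℝ => C * r / (1 - t * r)) (Set.uIcc (0:ℝ) 1) := by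
    rw [Set.uIcc_of_le zero_le_one]
    exact ContinuousOn.div continuousOn_const (by fun_prop)
      (fun t ht => ne_of_gt (hbpos t ht))
  have hbint : IntervalIntegrable (fun t : ℝ => C * r / (1 - t * r))
      MeasureTheory.volume 0 1 := hbcont.intervalIntegrable
  have hbval : ∫ t in (0:ℝ)..1, C * r / (1 - t * r) = C * Real.log (1 - r)⁻¹ := by
    have hFder : ∀ t ∈ Set.uIcc (0:ℝ) 1,
        HasDerivAt (fun t : ℝ => -C * Real.log (1 - t * r)) (C * r / (1 - t * r)) t := by
      intro t ht
      rw [Set.uIcc_of_le zero_le_one] at ht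
      have hu : HasDerivAt (fun t : ℝ => 1 - t * r) (-r) t := by
        simpa using ((hasDerivAt_id t).mul_const r).const_sub 1
      have := (hu.log (ne_of_gt (hbpos t ht))).const_mul (-C)
      rw [show C * r / (1 - t * r) = -C * (-r / (1 - t * r)) by ring]
      exact this
    have := intervalIntegral.integral_eq_sub_of_hasDerivAt hFder hbint
    rw [this, Real.log_inv]
    simp
  have hnormle : ‖deriv ψ z - deriv ψ 0‖ ≤ C * Real.log (1 - r)⁻¹ := by
    have hlognn : 0 ≤ C * Real.log (1 - r)⁻¹ := by
      have h1r : 0 < 1 - r := by linarith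
      have h1i : (1:ℝ) ≤ (1 - r)⁻¹ := by nlinarith [inv_pos.2 h1r, mul_inv_cancel₀ (ne_of_gt h1r)]
      exact mul_nonneg hC0 (Real.log_nonneg h1i)
    rw [← key]
    refine le_trans (intervalIntegral.norm_integral_le_of_norm_le zero_le_one ?_ hbint) ?_
    swap
    · rw [hbval]
    filter_upwards with t ht
    have ht' : t ∈ Set.Icc (0:ℝ) 1 := ⟨le_of_lt ht.1, ht.2⟩
    have h1 : 0 < 1 - t * r := hbpos t ht'
    have h2 : (1 - (t*r) ^ 2) * ‖deriv (deriv ψ) (t • z)‖ ≤ C := by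
      have := hC (t • z) (hmem t ht')
      rwa [habs t ht'] at this
    have htr0 : 0 ≤ t * r := mul_nonneg ht'.1 hr0
    have htr1 : t * r < 1 := by linarith
    have h3 : 0 < 1 - (t*r) ^ 2 := by nlinarith
    have h4 : ‖deriv (deriv ψ) (t • z)‖ ≤ C / (1 - (t*r)^2) :=
      (le_div_iff₀ h3).2 (by linarith [h2, mul_comm (1 - (t*r)^2) (‖deriv (deriv ψ) (t • z)‖)])
    rw [norm_mul, ← hr]
    calc r * ‖deriv (deriv ψ) (t • z)‖
        ≤ r * (C / (1 - (t*r)^2)) := by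
          exact mul_le_mul_of_nonneg_left h4 hr0
      _ = C * (r / (1 - (t*r)^2)) := by ring
      _ ≤ C * (r / (1 - t * r)) := by
          refine mul_le_mul_of_nonneg_left ?_ hC0
          refine div_le_div_of_nonneg_left hr0 h1 ?_
          nlinarith
      _ = C * r / (1 - t * r) := by ring
  calc ‖deriv ψ z‖
      ≤ ‖deriv ψ 0‖ + ‖deriv ψ z - deriv ψ 0‖ := by
        have := norm_add_le (deriv ψ 0) (deriv ψ z - deriv ψ 0)
        simpa using this
    _ ≤ ‖deriv ψ 0‖ + C * Real.log (1 - r)⁻¹ := by linarith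

/-- `Λ(ψ) = ψ″ − (ψ′)²/2` sends `B^Z_0(𝔻)` into `A^Z_0(𝔻)`:
for every `ψ ∈ B^Z_0(𝔻)`,
`lim_{t→0} sup_{1−t<|z|<1} (1−|z|²)|ψ″(z) − ψ′(z)²/2| = 0`. -/
theorem lambda_maps_littleBZ_to_littleAZ (ψ : ℂ → ℂ)
    (hψ : memBZ ψ) (hψ0 : littleBZ ψ) :
    ∀ ε : ℝ, 0 < ε → ∃ t : ℝ, 0 < t ∧ ∀ z : ℂ,
      1 - t < ‖z‖ → ‖z‖ < 1 →
        (1 - ‖z‖ ^ 2) *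
          ‖deriv (deriv ψ) z - (deriv ψ z) ^ 2 / 2‖ ≤ ε := by
  intro ε hε
  obtain ⟨hd, C₀, hC₀⟩ := hψ
  set C := max C₀ 0 with hCdef
  have hCnn : 0 ≤ C := le_max_right _ _
  have hC : ∀ w ∈ ball (0:ℂ) 1,
      (1 - ‖w‖ ^ 2) * ‖deriv (deriv ψ) w‖ ≤ C :=
    fun w hw => le_trans (hC₀ w hw) (le_max_left _ _)
  set A := ‖deriv ψ 0‖ with hAdef
  have hAnn : 0 ≤ A := norm_nonneg _
  have hB := tendstoAux A C
  have hev : ∀ᶠ s in nhdsWithin 0 (Set.Ioi 0),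
      s * (A + C * Real.log s⁻¹) ^ 2 < ε / 2 :=
    hB.eventually_lt_const (half_pos hε)
  obtain ⟨δ, hδpos, hδsub⟩ := Metric.mem_nhdsWithin_iff.1 hev
  obtain ⟨t₁, ht₁, h₁⟩ := hψ0 (ε/2) (half_pos hε)
  refine ⟨min t₁ (min δ 1), by positivity, ?_⟩
  intro z hz1 hz2
  set r := ‖z‖ with hrdef
  have hr0 : 0 ≤ r := norm_nonneg z
  have hs1 : 1 - r < min t₁ (min δ 1) := by
    have := hz1; simp only [hrdef] at this ⊢; linarith
  have hspos : 0 < 1 - r := by linarith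
  have hsδ : 1 - r < δ := lt_of_lt_of_le hs1 (le_trans (min_le_right _ _) (min_le_left _ _))
  have hst₁ : 1 - r < t₁ := lt_of_lt_of_le hs1 (min_le_left _ _)
  -- first term
  have hterm1 : (1 - r ^ 2) * ‖deriv (deriv ψ) z‖ ≤ ε / 2 :=
    h₁ z (by linarith) hz2
  -- second term
  have hsmem : (1 - r) ∈ ball (0:ℝ) δ ∩ Set.Ioi 0 := by
    constructor
    · rw [mem_ball, dist_zero_right, Real.norm_eq_abs, abs_of_pos hspos]; exact hsδ
    · exact hspos
  have hsbound : (1 - r) * (A + C * Real.log (1 - r)⁻¹) ^ 2 < ε / 2 := hδsub hsmem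
  have hψ' : ‖deriv ψ z‖ ≤ A + C * Real.log (1 - r)⁻¹ :=
    derivBound ψ hd C hC z hz2
  have hlognn : 0 ≤ Real.log (1 - r)⁻¹ := by
    refine Real.log_nonneg ?_
    rw [le_inv_comm₀ one_pos hspos]
    linarith
  have hMnn : 0 ≤ A + C * Real.log (1 - r)⁻¹ := by positivity
  have hterm2 : (1 - r ^ 2) * (‖deriv ψ z‖ ^ 2 / 2) ≤ ε / 2 := by
    have h5 : ‖deriv ψ z‖ ^ 2 ≤ (A + C * Real.log (1 - r)⁻¹) ^ 2 :=
      pow_le_pow_left₀ (norm_nonneg _) hψ' 2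
    have h6 : 1 - r ^ 2 ≤ 2 * (1 - r) := by nlinarith
    have h7 : 0 ≤ 1 - r ^ 2 := by nlinarith
    calc (1 - r ^ 2) * (‖deriv ψ z‖ ^ 2 / 2)
        ≤ (2 * (1 - r)) * ((A + C * Real.log (1 - r)⁻¹) ^ 2 / 2) := by
          apply mul_le_mul h6 _ (by positivity) (by linarith)
          exact div_le_div_of_nonneg_right h5 (by norm_num)
      _ = (1 - r) * (A + C * Real.log (1 - r)⁻¹) ^ 2 := by ring
      _ ≤ ε / 2 := le_of_lt hsbound
  -- combining
  have htri : ‖deriv (deriv ψ) z - (deriv ψ z) ^ 2 / 2‖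
      ≤ ‖deriv (deriv ψ) z‖ + ‖deriv ψ z‖ ^ 2 / 2 := by
    have := norm_add_le (deriv (deriv ψ) z) (-((deriv ψ z) ^ 2 / 2))
    simp only [sub_eq_add_neg] at *
    calc ‖deriv (deriv ψ) z + -((deriv ψ z) ^ 2 / 2)‖
        ≤ ‖deriv (deriv ψ) z‖ + ‖-((deriv ψ z) ^ 2 / 2)‖ := this
      _ = ‖deriv (deriv ψ) z‖ + ‖deriv ψ z‖ ^ 2 / 2 := by
          rw [norm_neg, norm_div, norm_pow]
          norm_num
  have h7 : 0 ≤ 1 - r ^ 2 := by nlinarith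
  calc (1 - r ^ 2) * ‖deriv (deriv ψ) z - (deriv ψ z) ^ 2 / 2‖
      ≤ (1 - r ^ 2) * (‖deriv (deriv ψ) z‖ + ‖deriv ψ z‖ ^ 2 / 2) :=
        mul_le_mul_of_nonneg_left htri h7
    _ = (1 - r ^ 2) * ‖deriv (deriv ψ) z‖
        + (1 - r ^ 2) * (‖deriv ψ z‖ ^ 2 / 2) := by ring
    _ ≤ ε / 2 + ε / 2 := add_le_add hterm1 hterm2
    _ = ε := by ring
end

section
/- If ψ₁, ψ₂ ∈ B^Z(𝔻) satisfy ψ₁ − ψ₂ ∈ B^Z_0(𝔻), then Λ(ψ₁) − Λ(ψ₂) ∈ A^Z_0(𝔻), where Λ(ψ) = ψ″ − (ψ′)²/2. -/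
open Metric

/-- `φ ∈ A^Z_0(𝔻)`: finite `A^Z`-sup together with the vanishing condition
`lim_{t→0} sup_{1−t<|z|<1} (1−|z|²)|φ(z)| = 0`. -/
def memLittleAZ (φ : ℂ → ℂ) : Prop :=
  (∃ C : ℝ, ∀ z ∈ ball (0:ℂ) 1,
    (1 - ‖z‖ ^ 2) * ‖φ z‖ ≤ C) ∧
  (∀ ε : ℝ, 0 < ε → ∃ t : ℝ, 0 < t ∧ ∀ z : ℂ,
    1 - t < ‖z‖ → ‖z‖ < 1 →
      (1 - ‖z‖ ^ 2) * ‖φ z‖ ≤ ε)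

/-- `Λ(ψ) = ψ″ − (ψ′)²/2`. -/
noncomputable def lambdaMap (ψ : ℂ → ℂ) : ℂ → ℂ :=
  fun z => deriv (deriv ψ) z - (deriv ψ z) ^ 2 / 2

section Aux
variable {ψ : ℂ → ℂ} {C : ℝ}

lemma BZconst_nonneg (hC : ∀ z ∈ ball (0:ℂ) 1,
    (1 - ‖z‖ ^ 2) * ‖deriv (deriv ψ) z‖ ≤ C) : 0 ≤ C := by
  have h := hC 0 (by simp)
  simp only [norm_zero, ne_eq, OfNat.ofNat_ne_zero, not_false_eq_true, zero_pow, sub_zero,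
    one_mul] at h
  exact le_trans (norm_nonneg _) h


lemma derivGrowth {ψ : ℂ → ℂ} {C : ℝ}
    (hψ : DifferentiableOn ℂ ψ (ball (0:ℂ) 1))
    (hC : ∀ z ∈ ball (0:ℂ) 1,
      (1 - ‖z‖ ^ 2) * ‖deriv (deriv ψ) z‖ ≤ C) :
    ∀ z ∈ ball (0:ℂ) 1,
      ‖deriv ψ z‖ ≤
        ‖deriv ψ 0‖ + C * Real.log (1 / (1 - ‖z‖)) := by
  have hAn : AnalyticOnNhd ℂ ψ (ball (0:ℂ) 1) := hψ.analyticOnNhd isOpen_ball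
  have hAn' : AnalyticOnNhd ℂ (deriv ψ) (ball (0:ℂ) 1) := hAn.deriv
  intro z hz
  set r : ℝ := ‖z‖ with hr
  have hr0 : 0 ≤ r := norm_nonneg z
  have hr1 : r < 1 := by simpa [mem_ball, Complex.dist_eq] using hz
  -- membership of t*z
  have hmem : ∀ t : ℝ, t ∈ Set.Icc (0:ℝ) 1 → (↑t * z : ℂ) ∈ ball (0:ℂ) 1 := by
    intro t ht
    simp only [mem_ball, dist_zero_right, norm_mul, Complex.norm_real, Real.norm_eq_abs,
      abs_of_nonneg ht.1]
    calc t * r ≤ 1 * r := by nlinarith [ht.2]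
    _ < 1 := by simpa using hr1
  set f : ℝ → ℂ := fun t => deriv ψ (↑t * z) with hf
  set f' : ℝ → ℂ := fun t => deriv (deriv ψ) (↑t * z) * z with hf'
  have hder : ∀ t ∈ Set.Icc (0:ℝ) 1, HasDerivAt f (f' t) t := by
    intro t ht
    have h1 : HasDerivAt (deriv ψ) (deriv (deriv ψ) (↑t * z)) (↑t * z) :=
      ((hAn' _ (hmem t ht)).differentiableAt).hasDerivAt
    have h2 : HasDerivAt (fun w : ℂ => w * z) z (↑t : ℂ) := hasDerivAt_mul_const z
    have h3 := (h1.comp (↑t : ℂ) h2)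
    have h4 := h3.comp_ofReal
    simpa [Function.comp] using h4
  set B : ℝ → ℝ := fun t => ‖deriv ψ 0‖ + C * (-Real.log (1 - t * r)) with hB
  set B' : ℝ → ℝ := fun t => C * (r / (1 - t * r)) with hB'
  have hBder : ∀ t ∈ Set.Icc (0:ℝ) 1, HasDerivAt B (B' t) t := by
    intro t ht
    have hne : (1 : ℝ) - t * r > 0 := by nlinarith [ht.1, ht.2]
    have h1 : HasDerivAt (fun t : ℝ => 1 - t * r) (-r) t := by
      simpa using ((hasDerivAt_mul_const r (x := t)).const_sub 1)
    have h2 : HasDerivAt (fun t : ℝ => Real.log (1 - t * r)) (-r / (1 - t * r)) t :=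
      h1.log hne.ne'
    have h3 := ((h2.neg.const_mul C).const_add (‖deriv ψ 0‖))
    refine h3.congr_deriv ?_
    rw [hB']
    ring
  have hC0 : 0 ≤ C := by
    have h := hC 0 (by simp)
    simp only [norm_zero, ne_eq, OfNat.ofNat_ne_zero, not_false_eq_true, zero_pow, sub_zero,
      one_mul] at h
    exact le_trans (norm_nonneg _) h
  have key := image_norm_le_of_norm_deriv_right_le_deriv_boundary'
    (f := f) (f' := f') (B := B) (B' := B') (a := 0) (b := 1)
    (fun t ht => (hder t ht).continuousAt.continuousWithinAt)
    (fun t ht => (hder t (Set.mem_Icc_of_Ico ht)).hasDerivWithinAt)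
    (by simp [f, B])
    (fun t ht => (hBder t ht).continuousAt.continuousWithinAt)
    (fun t ht => (hBder t (Set.mem_Icc_of_Ico ht)).hasDerivWithinAt)
    ?_ (Set.right_mem_Icc.2 zero_le_one)
  · have : ‖deriv ψ z‖ ≤ B 1 := by
      simpa [f] using key
    rw [hB] at this
    simp only [one_mul] at this
    calc ‖deriv ψ z‖ ≤ ‖deriv ψ 0‖ + C * (-Real.log (1 - r)) := this
    _ = ‖deriv ψ 0‖ + C * Real.log (1 / (1 - r)) := by
        rw [← Real.log_inv, one_div]
  · intro t ht
    have ht' : t ∈ Set.Icc (0:ℝ) 1 := Set.mem_Icc_of_Ico ht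
    have hu0 : 0 ≤ t * r := mul_nonneg ht.1 hr0
    have hu1 : t * r < 1 := by nlinarith [ht'.2]
    have h1u : 0 < 1 - t * r := by linarith
    have h1u2 : 0 < 1 - (t * r) ^ 2 := by nlinarith
    have habs : ‖(↑t * z : ℂ)‖ = t * r := by
      simp [norm_mul, Complex.norm_real, abs_of_nonneg ht.1, hr]
    have hb := hC _ (hmem t ht')
    rw [habs] at hb
    have hX : ‖deriv (deriv ψ) (↑t * z)‖ ≤ C / (1 - (t*r)^2) := by
      rw [le_div_iff₀ h1u2]; linarith [hb]
    have : ‖f' t‖ = ‖deriv (deriv ψ) (↑t * z)‖ * r := by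
      simp [f', norm_mul, hr]
    rw [this, hB']
    calc ‖deriv (deriv ψ) (↑t * z)‖ * r ≤ (C / (1 - (t*r)^2)) * r :=
          mul_le_mul_of_nonneg_right hX hr0
    _ ≤ C * (r / (1 - t * r)) := by
        rw [div_mul_eq_mul_div, mul_div_assoc]
        gcongr
        nlinarith


lemma derivGrowth' (hψ : DifferentiableOn ℂ ψ (ball (0:ℂ) 1))
    (hC : ∀ z ∈ ball (0:ℂ) 1,
      (1 - ‖z‖ ^ 2) * ‖deriv (deriv ψ) z‖ ≤ C) :
    ∀ z ∈ ball (0:ℂ) 1,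
      ‖deriv ψ z‖ ≤
        (‖deriv ψ 0‖ + 4 * C) * (1 - ‖z‖) ^ (-(4⁻¹:ℝ)) := by
  intro z hz
  have h := derivGrowth hψ hC z hz
  have hC0 : 0 ≤ C := BZconst_nonneg hC
  set r := ‖z‖ with hrdef
  have hr1 : r < 1 := by simpa [mem_ball, Complex.dist_eq] using hz
  set s : ℝ := 1 - r with hsdef
  have hs : 0 < s := by simp only [hsdef]; linarith
  have hs1 : s ≤ 1 := by
    have : 0 ≤ r := norm_nonneg z
    simp only [hsdef]; linarith
  have hlog : Real.log (1/s) ≤ (1/s) ^ (4⁻¹:ℝ) / (4⁻¹:ℝ) :=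
    Real.log_le_rpow_div (by positivity) (by norm_num)
  have hrw : (1/s) ^ (4⁻¹:ℝ) = s ^ (-(4⁻¹:ℝ)) := by
    rw [one_div, Real.inv_rpow hs.le, ← Real.rpow_neg hs.le]
  rw [hrw] at hlog
  have hlog' : Real.log (1/s) ≤ 4 * s ^ (-(4⁻¹:ℝ)) := by
    calc Real.log (1/s) ≤ s ^ (-(4⁻¹:ℝ)) / (4⁻¹:ℝ) := hlog
    _ = 4 * s ^ (-(4⁻¹:ℝ)) := by ring
  have hone : 1 ≤ s ^ (-(4⁻¹:ℝ)) :=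
    Real.one_le_rpow_of_pos_of_le_one_of_nonpos hs hs1 (by norm_num)
  have hA : 0 ≤ ‖deriv ψ 0‖ := norm_nonneg _
  set P := s ^ (-(4⁻¹:ℝ))
  calc ‖deriv ψ z‖ ≤ ‖deriv ψ 0‖ + C * Real.log (1/s) := h
  _ ≤ ‖deriv ψ 0‖ + C * (4 * P) := by
      have := mul_le_mul_of_nonneg_left hlog' hC0; linarith
  _ ≤ (‖deriv ψ 0‖ + 4 * C) * P := by nlinarith

end Aux

/-- if `ψ₁, ψ₂ ∈ B^Z(𝔻)` and `ψ₁ − ψ₂ ∈ B^Z_0(𝔻)`, then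
`Λ(ψ₁) − Λ(ψ₂) ∈ A^Z_0(𝔻)`. -/
theorem lambda_diff_mem_littleAZ (ψ₁ ψ₂ : ℂ → ℂ)
    (h₁ : memBZ ψ₁) (h₂ : memBZ ψ₂)
    (hdiff : memBZ (fun z => ψ₁ z - ψ₂ z) ∧ littleBZ (fun z => ψ₁ z - ψ₂ z)) :
    memLittleAZ (fun z => lambdaMap ψ₁ z - lambdaMap ψ₂ z) := by
  obtain ⟨⟨hdg, Cg, hCg⟩, hlittle⟩ := hdiff
  obtain ⟨hd₁, C₁, hC₁⟩ := h₁
  obtain ⟨hd₂, C₂, hC₂⟩ := h₂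
  have hC₁0 : 0 ≤ C₁ := BZconst_nonneg hC₁
  have hC₂0 : 0 ≤ C₂ := BZconst_nonneg hC₂
  have hCg0 : 0 ≤ Cg := BZconst_nonneg hCg
  set g : ℂ → ℂ := fun z => ψ₁ z - ψ₂ z with hgdef
  set K₁ : ℝ := ‖deriv ψ₁ 0‖ + 4 * C₁ with hK₁def
  set K₂ : ℝ := ‖deriv ψ₂ 0‖ + 4 * C₂ with hK₂def
  set Kg : ℝ := ‖deriv g 0‖ + 4 * Cg with hKgdef
  have hK₁0 : 0 ≤ K₁ := by have := norm_nonneg (deriv ψ₁ 0); simp only [hK₁def]; linarith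
  have hK₂0 : 0 ≤ K₂ := by have := norm_nonneg (deriv ψ₂ 0); simp only [hK₂def]; linarith
  have hKg0 : 0 ≤ Kg := by have := norm_nonneg (deriv g 0); simp only [hKgdef]; linarith
  set M : ℝ := Kg * (K₁ + K₂) with hMdef
  have hM0 : 0 ≤ M := mul_nonneg hKg0 (by linarith)
  clear_value g K₁ K₂ Kg M
  -- key pointwise estimate
  have key : ∀ z ∈ ball (0:ℂ) 1,
      (1 - ‖z‖ ^ 2) * ‖lambdaMap ψ₁ z - lambdaMap ψ₂ z‖
        ≤ (1 - ‖z‖ ^ 2) * ‖deriv (deriv g) z‖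
          + M * (1 - ‖z‖) ^ ((2:ℝ)⁻¹) := by
    intro z hz
    have hr1' : ‖z‖ < 1 := by simpa [mem_ball, Complex.dist_eq] using hz
    have hr0' : 0 ≤ ‖z‖ := norm_nonneg z
    have hnb : ball (0:ℂ) 1 ∈ nhds z := isOpen_ball.mem_nhds hz
    have hdiff₁ : ∀ w ∈ ball (0:ℂ) 1, DifferentiableAt ℂ ψ₁ w :=
      fun w hw => hd₁.differentiableAt (isOpen_ball.mem_nhds hw)
    have hdiff₂ : ∀ w ∈ ball (0:ℂ) 1, DifferentiableAt ℂ ψ₂ w :=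
      fun w hw => hd₂.differentiableAt (isOpen_ball.mem_nhds hw)
    have e1 : ∀ w ∈ ball (0:ℂ) 1, deriv g w = deriv ψ₁ w - deriv ψ₂ w := by
      intro w hw
      rw [hgdef]
      exact deriv_sub (hdiff₁ w hw) (hdiff₂ w hw)
    have hAn₁ : AnalyticOnNhd ℂ (deriv ψ₁) (ball (0:ℂ) 1) :=
      (hd₁.analyticOnNhd isOpen_ball).deriv
    have hAn₂ : AnalyticOnNhd ℂ (deriv ψ₂) (ball (0:ℂ) 1) :=
      (hd₂.analyticOnNhd isOpen_ball).deriv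
    have ev : deriv g =ᶠ[nhds z] fun w => deriv ψ₁ w - deriv ψ₂ w := by
      filter_upwards [hnb] with w hw
      exact e1 w hw
    have e2 : deriv (deriv g) z = deriv (deriv ψ₁) z - deriv (deriv ψ₂) z := by
      rw [ev.deriv_eq]
      exact deriv_sub (hAn₁ z hz).differentiableAt (hAn₂ z hz).differentiableAt
    have hid : lambdaMap ψ₁ z - lambdaMap ψ₂ z
        = deriv (deriv g) z - deriv g z * (deriv ψ₁ z + deriv ψ₂ z) / 2 := by
      rw [e2, e1 z hz]
      simp only [lambdaMap]
      ring
    have hp := derivGrowth' hd₁ hC₁ z hz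
    have hq := derivGrowth' hd₂ hC₂ z hz
    have hgd := derivGrowth' hdg hCg z hz
    rw [← hK₁def] at hp
    rw [← hK₂def] at hq
    have hgd' : ‖deriv g z‖ ≤ Kg * (1 - ‖z‖) ^ (-(4⁻¹:ℝ)) := by
      rw [hKgdef]
      exact hgd
    set r := ‖z‖ with hrdef
    set s : ℝ := 1 - r with hsdef
    have hs : 0 < s := by simp only [hsdef]; linarith
    set P : ℝ := s ^ (-(4⁻¹:ℝ)) with hPdef
    have hP0 : 0 ≤ P := Real.rpow_nonneg hs.le _
    have hPP : s * (P * P) = s ^ ((2:ℝ)⁻¹) := by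
      rw [hPdef, ← Real.rpow_add hs, show (-(4⁻¹:ℝ)) + -(4⁻¹) = -(2⁻¹) by norm_num]
      nth_rewrite 1 [← Real.rpow_one s]
      rw [← Real.rpow_add hs]
      norm_num
    clear_value r s P
    have htri : ‖lambdaMap ψ₁ z - lambdaMap ψ₂ z‖
        ≤ ‖deriv (deriv g) z‖
          + ‖deriv g z‖
            * (‖deriv ψ₁ z‖ + ‖deriv ψ₂ z‖) / 2 := by
      rw [hid]
      calc ‖deriv (deriv g) z - deriv g z * (deriv ψ₁ z + deriv ψ₂ z) / 2‖
          ≤ ‖deriv (deriv g) z‖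
            + ‖deriv g z * (deriv ψ₁ z + deriv ψ₂ z) / 2‖ := by
            exact norm_sub_le _ _
      _ ≤ ‖deriv (deriv g) z‖
            + ‖deriv g z‖
              * (‖deriv ψ₁ z‖ + ‖deriv ψ₂ z‖) / 2 := by
            rw [norm_div, norm_mul, Complex.norm_two]
            have := norm_add_le (deriv ψ₁ z) (deriv ψ₂ z)
            have h0 : 0 ≤ ‖deriv g z‖ := norm_nonneg _
            gcongr
    have h1r2 : 0 ≤ 1 - r^2 := by nlinarith
    have h2s : 1 - r^2 ≤ 2*s := by simp only [hsdef]; nlinarith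
    have hfac : ‖deriv g z‖
        * (‖deriv ψ₁ z‖ + ‖deriv ψ₂ z‖)
        ≤ (Kg * P) * ((K₁ + K₂) * P) := by
      have hpq : ‖deriv ψ₁ z‖ + ‖deriv ψ₂ z‖ ≤ (K₁ + K₂) * P := by
        have h' : K₁ * P + K₂ * P = (K₁ + K₂) * P := by ring
        linarith [hp, hq]
      exact mul_le_mul hgd' hpq (by positivity) (by positivity)
    have hmain : (1 - r^2) * (‖deriv g z‖
        * (‖deriv ψ₁ z‖ + ‖deriv ψ₂ z‖) / 2)
        ≤ M * s ^ ((2:ℝ)⁻¹) := by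
      calc (1 - r^2) * (‖deriv g z‖
            * (‖deriv ψ₁ z‖ + ‖deriv ψ₂ z‖) / 2)
          ≤ (2*s) * (((Kg * P) * ((K₁ + K₂) * P)) / 2) := by
            apply mul_le_mul h2s (by gcongr) (by positivity) (by positivity)
      _ = M * (s * (P * P)) := by rw [hMdef]; ring
      _ = M * s ^ ((2:ℝ)⁻¹) := by rw [hPP]
    calc (1 - r^2) * ‖lambdaMap ψ₁ z - lambdaMap ψ₂ z‖
        ≤ (1 - r^2) * (‖deriv (deriv g) z‖
          + ‖deriv g z‖
            * (‖deriv ψ₁ z‖ + ‖deriv ψ₂ z‖) / 2) :=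
          mul_le_mul_of_nonneg_left htri h1r2
    _ = (1 - r^2) * ‖deriv (deriv g) z‖
          + (1 - r^2) * (‖deriv g z‖
            * (‖deriv ψ₁ z‖ + ‖deriv ψ₂ z‖) / 2) := by ring
    _ ≤ (1 - r^2) * ‖deriv (deriv g) z‖ + M * s ^ ((2:ℝ)⁻¹) := by
          linarith [hmain]
  constructor
  · refine ⟨Cg + M, fun z hz => ?_⟩
    have hr1 : ‖z‖ < 1 := by simpa [mem_ball, Complex.dist_eq] using hz
    have hr0 : 0 ≤ ‖z‖ := norm_nonneg z
    have hs : (0:ℝ) < 1 - ‖z‖ := by linarith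
    have h1 : (1 - ‖z‖) ^ ((2:ℝ)⁻¹) ≤ 1 :=
      Real.rpow_le_one hs.le (by linarith) (by norm_num)
    have h2 := key z hz
    have h3 := hCg z hz
    nlinarith [mul_le_mul_of_nonneg_left h1 hM0]
  · intro ε hε
    obtain ⟨t₀, ht₀, hsmall⟩ := hlittle (ε/2) (by linarith)
    set δ : ℝ := ε / (2 * (M + 1)) with hδdef
    have hδ : 0 < δ := by positivity
    refine ⟨min t₀ (δ^2), by positivity, fun z h1 h2 => ?_⟩
    have hzball : z ∈ ball (0:ℂ) 1 := by simpa [mem_ball, Complex.dist_eq] using h2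
    have h2' := key z hzball
    have hga : 1 - t₀ < ‖z‖ := by
      have : min t₀ (δ^2) ≤ t₀ := min_le_left _ _
      linarith
    have hgb := hsmall z hga h2
    have hsδ : 1 - ‖z‖ ≤ δ^2 := by
      have : min t₀ (δ^2) ≤ δ^2 := min_le_right _ _
      linarith
    have hs0 : (0:ℝ) ≤ 1 - ‖z‖ := by linarith
    have hrp : (1 - ‖z‖) ^ ((2:ℝ)⁻¹) ≤ (δ^2) ^ ((2:ℝ)⁻¹) :=
      Real.rpow_le_rpow hs0 hsδ (by norm_num)
    have hδeq : ((δ^2 : ℝ)) ^ ((2:ℝ)⁻¹) = δ := by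
      rw [← Real.rpow_natCast δ 2, ← Real.rpow_mul hδ.le]
      norm_num
    rw [hδeq] at hrp
    have hM : M * (1 - ‖z‖) ^ ((2:ℝ)⁻¹) ≤ (M+1) * δ := by
      calc M * (1 - ‖z‖) ^ ((2:ℝ)⁻¹) ≤ M * δ :=
            mul_le_mul_of_nonneg_left hrp hM0
      _ ≤ (M+1) * δ := by nlinarith
    have hMδ : (M+1) * δ = ε/2 := by
      rw [hδdef]; field_simp
    calc (1 - ‖z‖ ^ 2) * ‖lambdaMap ψ₁ z - lambdaMap ψ₂ z‖
        ≤ (1 - ‖z‖ ^ 2) * ‖deriv (deriv g) z‖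
          + M * (1 - ‖z‖) ^ ((2:ℝ)⁻¹) := h2'
    _ ≤ ε/2 + ε/2 := by
        have := hM.trans_eq hMδ
        exact add_le_add hgb this
    _ = ε := by ring
end

section
/- If φ ∈ B^Z(𝔻) and ψ ∈ B^Z_0(𝔻), then the function ψ″ − φ′ψ′ belongs to A^Z_0(𝔻); that is, sup_{|z|<1} (1−|z|²)|ψ″(z) − φ′(z)ψ′(z)| < ∞ and lim_{t→0} sup_{1−t<|z|<1} (1−|z|²)|ψ″(z) − φ′(z)ψ′(z)| = 0. (This is the assertion that the derivative of Λ at φ in the direction ψ, namely d_φΛ(ψ) = ψ″ − φ′ψ′, maps B^Z_0(𝔻) into A^Z_0(𝔻).) -/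
open Metric

lemma keyA (f : ℂ → ℂ) (C : ℝ) (hf : DifferentiableOn ℂ f (ball (0:ℂ) 1))
    (hC : ∀ w ∈ ball (0:ℂ) 1, (1 - ‖w‖ ^ 2) * ‖deriv f w‖ ≤ C) :
    ∀ z ∈ ball (0:ℂ) 1,
      ‖f z - f 0‖ ≤ C * (-Real.log (1 - ‖z‖)) := by
  have hC0 : 0 ≤ C := by
    have h := hC 0 (by simp)
    simp at h
    exact le_trans (norm_nonneg _) h
  intro z hz
  set r : ℝ := ‖z‖ with hr
  have hr0 : 0 ≤ r := norm_nonneg z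
  have hr1 : r < 1 := by simpa [hr] using mem_ball_zero_iff.mp hz
  have hmem : ∀ t : ℝ, t ∈ Set.Icc (0:ℝ) 1 → (t:ℂ) * z ∈ ball (0:ℂ) 1 := by
    intro t ht
    simp only [mem_ball_zero_iff, norm_mul, Complex.norm_real, Real.norm_eq_abs]
    calc |t| * r ≤ 1 * r := by
          apply mul_le_mul_of_nonneg_right _ hr0
          rw [abs_le]; exact ⟨by linarith [ht.1], ht.2⟩
      _ < 1 := by simpa using hr1
  have hfa : AnalyticOnNhd ℂ f (ball (0:ℂ) 1) :=
    hf.analyticOnNhd isOpen_ball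
  have hdc : ContinuousOn (deriv f) (ball (0:ℂ) 1) :=
    (hfa.deriv).continuousOn
  have hder : ∀ t ∈ Set.Icc (0:ℝ) 1,
      HasDerivAt (fun s : ℝ => f ((s:ℂ) * z)) (z * deriv f ((t:ℂ) * z)) t := by
    intro t ht
    have h1 : HasDerivAt (fun s : ℝ => (s:ℂ) * z) z t := by
      simpa using ((hasDerivAt_id ((t:ℂ))).mul_const z).comp_ofReal
    have h2 : HasDerivAt f (deriv f ((t:ℂ) * z)) ((t:ℂ) * z) :=
      (hf.differentiableAt (isOpen_ball.mem_nhds (hmem t ht))).hasDerivAt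
    simpa [mul_comm, Function.comp_def] using (h2.comp t h1 : HasDerivAt (fun s : ℝ => f ((s:ℂ)*z)) _ t)
  have hcont : ContinuousOn (fun t : ℝ => z * deriv f ((t:ℂ) * z)) (Set.Icc 0 1) := by
    apply ContinuousOn.mul continuousOn_const
    exact hdc.comp (Complex.continuous_ofReal.mul continuous_const).continuousOn
      (fun t ht => hmem t ht)
  have hint : IntervalIntegrable (fun t : ℝ => z * deriv f ((t:ℂ) * z))
      MeasureTheory.volume 0 1 :=
    (hcont.mono (by rw [Set.uIcc_of_le zero_le_one])).intervalIntegrable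
  have hFTC : f z - f 0 = ∫ t in (0:ℝ)..1, z * deriv f ((t:ℂ) * z) := by
    have := intervalIntegral.integral_eq_sub_of_hasDerivAt
      (fun t ht => hder t (by rwa [Set.uIcc_of_le zero_le_one] at ht)) hint
    rw [this]; norm_num
  have hpos : ∀ t ∈ Set.Icc (0:ℝ) 1, (0:ℝ) < 1 - t * r := by
    intro t ht
    nlinarith [ht.1, ht.2]
  have hbound : ∀ t ∈ Set.Icc (0:ℝ) 1,
      ‖z * deriv f ((t:ℂ) * z)‖ ≤ C * r / (1 - t * r) := by
    intro t ht
    have h01 : 0 ≤ t * r := mul_nonneg ht.1 hr0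
    have h11 : t * r ≤ 1 := by nlinarith [ht.2, hr1.le]
    have htz : ‖(t:ℂ) * z‖ = t * r := by
      simp [norm_mul, Complex.norm_real, abs_of_nonneg ht.1, hr]
    have hp := hpos t ht
    have h1 : ‖deriv f ((t:ℂ)*z)‖ * (1 - t * r) ≤ C := by
      have h2 := hC _ (hmem t ht)
      rw [htz] at h2
      refine le_trans ?_ h2
      rw [mul_comm]
      apply mul_le_mul_of_nonneg_right _ (norm_nonneg _)
      nlinarith [mul_nonneg h01 (by linarith : (0:ℝ) ≤ 1 - t * r)]
    have h3 : ‖deriv f ((t:ℂ)*z)‖ ≤ C / (1 - t*r) :=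
      (le_div_iff₀ hp).2 h1
    rw [norm_mul, ← hr]
    calc r * ‖deriv f ((t:ℂ)*z)‖ ≤ r * (C / (1 - t*r)) :=
          mul_le_mul_of_nonneg_left h3 hr0
      _ = C * r / (1 - t * r) := by ring
  have hcomp : (∫ t in (0:ℝ)..1, C * r / (1 - t * r)) = C * (-Real.log (1 - r)) := by
    have hanti : ∀ t ∈ Set.Icc (0:ℝ) 1,
        HasDerivAt (fun s : ℝ => -C * Real.log (1 - s * r)) (C * r / (1 - t * r)) t := by
      intro t ht
      have hp := hpos t ht
      have h1 : HasDerivAt (fun s : ℝ => 1 - s * r) (-r) t := by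
        simpa using ((hasDerivAt_id t).mul_const r).const_sub 1
      have h2 := (Real.hasDerivAt_log (ne_of_gt hp)).comp t h1
      have h3 := h2.const_mul (-C)
      exact h3.congr_deriv (by ring)
    have hcint : IntervalIntegrable (fun t : ℝ => C * r / (1 - t * r))
        MeasureTheory.volume 0 1 := by
      apply ContinuousOn.intervalIntegrable
      rw [Set.uIcc_of_le zero_le_one]
      apply ContinuousOn.div continuousOn_const
        (continuous_const.sub (continuous_id.mul continuous_const)).continuousOn
      intro t ht; exact ne_of_gt (hpos t ht)
    have heq := intervalIntegral.integral_eq_sub_of_hasDerivAt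
      (fun t ht => hanti t (by rwa [Set.uIcc_of_le zero_le_one] at ht)) hcint
    rw [heq]
    norm_num
  have hlog0 : 0 ≤ -Real.log (1 - r) := by
    rw [neg_nonneg]
    exact Real.log_nonpos (by linarith) (by linarith)
  rw [hFTC]
  calc ‖∫ t in (0:ℝ)..1, z * deriv f ((t:ℂ) * z)‖
      ≤ |∫ t in (0:ℝ)..1, C * r / (1 - t * r)| := by
        refine le_trans ?_ (le_abs_self _)
        apply intervalIntegral.norm_integral_le_of_norm_le zero_le_one ?_ ?_
        · filter_upwards with t ht
          exact hbound t ⟨le_of_lt (by simpa using ht.1), by simpa using ht.2⟩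
        · apply ContinuousOn.intervalIntegrable
          rw [Set.uIcc_of_le zero_le_one]
          apply ContinuousOn.div continuousOn_const
            (continuous_const.sub (continuous_id.mul continuous_const)).continuousOn
          intro t ht; exact ne_of_gt (hpos t ht)
    _ = C * (-Real.log (1 - r)) := by
        rw [hcomp, abs_of_nonneg (mul_nonneg hC0 hlog0)]

lemma keyB (s A B A' B' : ℝ) (hs : 0 < s) (hs1 : s ≤ 1)
    (hA : 0 ≤ A) (hB : 0 ≤ B) (hA' : 0 ≤ A') (hB' : 0 ≤ B') :
    s * ((A + B * (-Real.log s)) * (A' + B' * (-Real.log s))) ≤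
      Real.sqrt s * ((A + 4*B) * (A' + 4*B')) := by
  set u : ℝ := Real.sqrt (Real.sqrt s) with hu
  have hs2 : 0 ≤ Real.sqrt s := Real.sqrt_nonneg s
  have hu0 : 0 < u := Real.sqrt_pos.2 (Real.sqrt_pos.2 hs)
  have hu1 : u ≤ 1 := by
    rw [hu, show (1:ℝ) = Real.sqrt (Real.sqrt 1) by simp]
    exact Real.sqrt_le_sqrt (Real.sqrt_le_sqrt hs1)
  have hu2 : u ^ 2 = Real.sqrt s := Real.sq_sqrt hs2
  have hu4 : u ^ 4 = s := by
    have : u ^ 4 = (u ^ 2) ^ 2 := by ring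
    rw [this, hu2, Real.sq_sqrt hs.le]
  have hL0 : 0 ≤ -Real.log s := by
    rw [neg_nonneg]; exact Real.log_nonpos hs.le hs1
  have hL : -Real.log s ≤ 4 / u := by
    have h1 : -Real.log s = 4 * (-Real.log u) := by
      rw [← hu4, Real.log_pow]; push_cast; ring
    have h2 : -Real.log u = Real.log u⁻¹ := (Real.log_inv u).symm
    have h3 : Real.log u⁻¹ ≤ u⁻¹ - 1 :=
      Real.log_le_sub_one_of_pos (inv_pos.2 hu0)
    rw [h1, h2, div_eq_mul_inv]
    nlinarith [inv_pos.2 hu0]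
  have step1 : s * ((A + B * (-Real.log s)) * (A' + B' * (-Real.log s))) ≤
      s * ((A + B * (4 / u)) * (A' + B' * (4 / u))) := by
    apply mul_le_mul_of_nonneg_left _ hs.le
    apply mul_le_mul
    · exact add_le_add_right (mul_le_mul_of_nonneg_left hL hB) A
    · exact add_le_add_right (mul_le_mul_of_nonneg_left hL hB') A'
    · positivity
    · positivity
  have step2 : s * ((A + B * (4 / u)) * (A' + B' * (4 / u))) =
      u ^ 2 * ((A * u + 4 * B) * (A' * u + 4 * B')) := by
    rw [← hu4]; field_simp
  have step3 : u ^ 2 * ((A * u + 4 * B) * (A' * u + 4 * B')) ≤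
      u ^ 2 * ((A + 4 * B) * (A' + 4 * B')) := by
    apply mul_le_mul_of_nonneg_left _ (by positivity)
    apply mul_le_mul
    · nlinarith
    · nlinarith
    · positivity
    · positivity
  calc s * ((A + B * (-Real.log s)) * (A' + B' * (-Real.log s)))
      ≤ s * ((A + B * (4 / u)) * (A' + B' * (4 / u))) := step1
    _ = u ^ 2 * ((A * u + 4 * B) * (A' * u + 4 * B')) := step2
    _ ≤ u ^ 2 * ((A + 4 * B) * (A' + 4 * B')) := step3
    _ = Real.sqrt s * ((A + 4*B) * (A' + 4*B')) := by rw [hu2]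

/-- if `φ ∈ B^Z(𝔻)` and `ψ ∈ B^Z_0(𝔻)`, then
`d_φΛ(ψ) = ψ″ − φ′ψ′` belongs to `A^Z_0(𝔻)`. -/
theorem dLambda_mem_littleAZ (φ ψ : ℂ → ℂ)
    (hφ : memBZ φ) (hψ : memBZ ψ) (hψ0 : littleBZ ψ) :
    (∃ C : ℝ, ∀ z ∈ ball (0:ℂ) 1,
      (1 - ‖z‖ ^ 2) *
        ‖deriv (deriv ψ) z - deriv φ z * deriv ψ z‖ ≤ C) ∧
    (∀ ε : ℝ, 0 < ε → ∃ t : ℝ, 0 < t ∧ ∀ z : ℂ,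
      1 - t < ‖z‖ → ‖z‖ < 1 →
        (1 - ‖z‖ ^ 2) *
          ‖deriv (deriv ψ) z - deriv φ z * deriv ψ z‖ ≤ ε) := by
  obtain ⟨hφd, Cφ, hCφ⟩ := hφ
  obtain ⟨hψd, Cψ, hCψ⟩ := hψ
  have h0 : (0:ℂ) ∈ ball (0:ℂ) 1 := by simp
  have hCφ0 : 0 ≤ Cφ := by
    have h := hCφ 0 h0; simp at h; exact le_trans (norm_nonneg _) h
  have hCψ0 : 0 ≤ Cψ := by
    have h := hCψ 0 h0; simp at h; exact le_trans (norm_nonneg _) h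
  have hφd' : DifferentiableOn ℂ (deriv φ) (ball (0:ℂ) 1) :=
    ((hφd.analyticOnNhd isOpen_ball).deriv).differentiableOn
  have hψd' : DifferentiableOn ℂ (deriv ψ) (ball (0:ℂ) 1) :=
    ((hψd.analyticOnNhd isOpen_ball).deriv).differentiableOn
  set Aφ : ℝ := ‖deriv φ 0‖ with hAφ
  set Aψ : ℝ := ‖deriv ψ 0‖ with hAψ
  have hAφ0 : 0 ≤ Aφ := norm_nonneg _
  have hAψ0 : 0 ≤ Aψ := norm_nonneg _
  have hφg : ∀ z ∈ ball (0:ℂ) 1, ‖deriv φ z‖ ≤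
      Aφ + Cφ * (-Real.log (1 - ‖z‖)) := by
    intro z hz
    have h := keyA (deriv φ) Cφ hφd' hCφ z hz
    calc ‖deriv φ z‖
        ≤ ‖deriv φ z - deriv φ 0‖ + ‖deriv φ 0‖ := by
          simpa using norm_add_le (deriv φ z - deriv φ 0) (deriv φ 0)
      _ ≤ Aφ + Cφ * (-Real.log (1 - ‖z‖)) := by rw [hAφ]; linarith
  have hψg : ∀ z ∈ ball (0:ℂ) 1, ‖deriv ψ z‖ ≤
      Aψ + Cψ * (-Real.log (1 - ‖z‖)) := by
    intro z hz
    have h := keyA (deriv ψ) Cψ hψd' hCψ z hz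
    calc ‖deriv ψ z‖
        ≤ ‖deriv ψ z - deriv ψ 0‖ + ‖deriv ψ 0‖ := by
          simpa using norm_add_le (deriv ψ z - deriv ψ 0) (deriv ψ 0)
      _ ≤ Aψ + Cψ * (-Real.log (1 - ‖z‖)) := by rw [hAψ]; linarith
  set K : ℝ := (Aφ + 4*Cφ) * (Aψ + 4*Cψ) with hK
  have hK0 : 0 ≤ K := by positivity
  -- main pointwise estimate
  have main : ∀ z ∈ ball (0:ℂ) 1,
      (1 - ‖z‖ ^ 2) *
        ‖deriv (deriv ψ) z - deriv φ z * deriv ψ z‖ ≤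
      (1 - ‖z‖ ^ 2) * ‖deriv (deriv ψ) z‖ +
        2 * Real.sqrt (1 - ‖z‖) * K := by
    intro z hz
    set r : ℝ := ‖z‖ with hr
    have hr0 : 0 ≤ r := norm_nonneg z
    have hr1 : r < 1 := by simpa [hr] using mem_ball_zero_iff.mp hz
    have hs : 0 < 1 - r := by linarith
    set L : ℝ := -Real.log (1 - r) with hL
    have hL0 : 0 ≤ L := by
      rw [hL, neg_nonneg]; exact Real.log_nonpos (by linarith) (by linarith)
    have hsq : (1:ℝ) - r ^ 2 = (1 + r) * (1 - r) := by ring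
    have h1 : (1 - r ^ 2) * ‖deriv (deriv ψ) z - deriv φ z * deriv ψ z‖
        ≤ (1 - r ^ 2) * ‖deriv (deriv ψ) z‖
          + (1 - r ^ 2) * (‖deriv φ z‖ * ‖deriv ψ z‖) := by
      have htri : ‖deriv (deriv ψ) z - deriv φ z * deriv ψ z‖ ≤
          ‖deriv (deriv ψ) z‖ + ‖deriv φ z‖ * ‖deriv ψ z‖ := by
        calc ‖deriv (deriv ψ) z - deriv φ z * deriv ψ z‖
            ≤ ‖deriv (deriv ψ) z‖ + ‖deriv φ z * deriv ψ z‖ := by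
              simpa using
                norm_sub_le (deriv (deriv ψ) z) (deriv φ z * deriv ψ z)
          _ = _ := by rw [norm_mul]
      have hnn : (0:ℝ) ≤ 1 - r ^ 2 := by nlinarith
      nlinarith [mul_le_mul_of_nonneg_left htri hnn]
    have h2 : (1 - r ^ 2) * (‖deriv φ z‖ * ‖deriv ψ z‖)
        ≤ 2 * ((1 - r) * ((Aφ + Cφ * L) * (Aψ + Cψ * L))) := by
      have hb1 := hφg z hz
      have hb2 := hψg z hz
      rw [← hr, ← hL] at hb1 hb2
      have hprod : ‖deriv φ z‖ * ‖deriv ψ z‖ ≤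
          (Aφ + Cφ * L) * (Aψ + Cψ * L) := by
        apply mul_le_mul hb1 hb2 (norm_nonneg _)
        positivity
      have h1r2 : (1:ℝ) - r ^ 2 ≤ 2 * (1 - r) := by nlinarith
      have hpn : 0 ≤ ‖deriv φ z‖ * ‖deriv ψ z‖ := by positivity
      have h1r2n : (0:ℝ) ≤ 1 - r ^ 2 := by nlinarith
      calc (1 - r ^ 2) * (‖deriv φ z‖ * ‖deriv ψ z‖)
          ≤ (2 * (1 - r)) * (‖deriv φ z‖ * ‖deriv ψ z‖) :=
            mul_le_mul_of_nonneg_right h1r2 hpn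
        _ ≤ (2 * (1 - r)) * ((Aφ + Cφ * L) * (Aψ + Cψ * L)) := by
            apply mul_le_mul_of_nonneg_left hprod (by linarith)
        _ = 2 * ((1 - r) * ((Aφ + Cφ * L) * (Aψ + Cψ * L))) := by ring
    have h3 : (1 - r) * ((Aφ + Cφ * L) * (Aψ + Cψ * L)) ≤ Real.sqrt (1 - r) * K := by
      rw [hK]
      exact keyB (1 - r) Aφ Cφ Aψ Cψ hs (by linarith) hAφ0 hCφ0 hAψ0 hCψ0
    calc (1 - r ^ 2) * ‖deriv (deriv ψ) z - deriv φ z * deriv ψ z‖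
        ≤ (1 - r ^ 2) * ‖deriv (deriv ψ) z‖
          + (1 - r ^ 2) * (‖deriv φ z‖ * ‖deriv ψ z‖) := h1
      _ ≤ (1 - r ^ 2) * ‖deriv (deriv ψ) z‖
          + 2 * ((1 - r) * ((Aφ + Cφ * L) * (Aψ + Cψ * L))) := by linarith
      _ ≤ (1 - r ^ 2) * ‖deriv (deriv ψ) z‖
          + 2 * (Real.sqrt (1 - r) * K) := by linarith
      _ = (1 - r ^ 2) * ‖deriv (deriv ψ) z‖
          + 2 * Real.sqrt (1 - r) * K := by ring
  constructor
  · refine ⟨Cψ + 2 * K, fun z hz => ?_⟩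
    have hr1 : ‖z‖ < 1 := by simpa using mem_ball_zero_iff.mp hz
    have hsqrt1 : Real.sqrt (1 - ‖z‖) ≤ 1 := by
      have h := Real.sqrt_le_sqrt
        (show 1 - ‖z‖ ≤ 1 by linarith [norm_nonneg z])
      simpa using h
    have := main z hz
    have h1 := hCψ z hz
    nlinarith [Real.sqrt_nonneg (1 - ‖z‖)]
  · intro ε hε
    obtain ⟨t₁, ht₁0, ht₁⟩ := hψ0 (ε/2) (by linarith)
    set δ : ℝ := (ε / (4 * (K + 1))) ^ 2 with hδ
    have hδ0 : 0 < δ := by positivity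
    refine ⟨min t₁ δ, lt_min ht₁0 hδ0, fun z hz1 hz2 => ?_⟩
    have hzball : z ∈ ball (0:ℂ) 1 := mem_ball_zero_iff.2 (by simpa using hz2)
    have hm := main z hzball
    have hψsmall := ht₁ z (by have := min_le_left t₁ δ; linarith) hz2
    have hsδ : 1 - ‖z‖ < δ := by
      have := min_le_right t₁ δ; linarith
    have hsmall : 2 * Real.sqrt (1 - ‖z‖) * K ≤ ε / 2 := by
      have hsq : Real.sqrt (1 - ‖z‖) ≤ ε / (4 * (K + 1)) := by
        calc Real.sqrt (1 - ‖z‖) ≤ Real.sqrt δ := Real.sqrt_le_sqrt hsδ.le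
          _ = ε / (4 * (K + 1)) := by
              rw [hδ, Real.sqrt_sq (by positivity)]
      calc 2 * Real.sqrt (1 - ‖z‖) * K
          ≤ 2 * (ε / (4 * (K + 1))) * K := by
            apply mul_le_mul_of_nonneg_right _ hK0
            linarith
        _ = 2 * ε * K / (4 * (K + 1)) := by ring
        _ ≤ ε / 2 := by
            rw [div_le_div_iff₀ (by positivity) (by norm_num : (0:ℝ) < 2)]
            nlinarith
    linarith
end

section
/- There is an absolute constant C > 0 with the following property. For every ν ∈ L^Z(𝔻*), the function φ(z) = ∫_{𝔻*} ν(w)/(w − z)⁴ dA(w) (with dA two-dimensional Lebesgue measure) is well-defined and holomorphic on 𝔻 = {|z| < 1}, and satisfies sup_{|z|<1} (1−|z|²)|φ(z)| ≤ C·‖ν‖_Z; that is, φ ∈ A^Z(𝔻). -/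
open MeasureTheory Metric

/-- The exterior disk `𝔻* = {z : |z| > 1}`. -/
def extDisk : Set ℂ := {z : ℂ | 1 < ‖z‖}

section Aux
open Set

lemma radial_integrable {d : ℝ} (hd : 0 < d) :
    Integrable (fun u : ℂ => ((max ‖u‖ d) ^ 3)⁻¹) volume := by
  have hcont : Continuous fun u : ℂ => ((max ‖u‖ d) ^ 3)⁻¹ := by
    apply Continuous.inv₀
    · exact (continuous_norm.max continuous_const).pow 3
    · intro u; have : 0 < max ‖u‖ d := lt_max_of_lt_right hd; positivity
  refine ((integrable_one_add_norm (μ := volume) (E := ℂ)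
      (r := 3) (by simp [Complex.finrank_real_complex]; norm_num)).const_mul
      (((1 + d) / d) ^ 3)).mono' hcont.aestronglyMeasurable ?_
  filter_upwards with u
  have h0 : (0:ℝ) ≤ ‖u‖ := norm_nonneg u
  have hmax : 0 < max ‖u‖ d := lt_max_of_lt_right hd
  have h1 : 1 + ‖u‖ ≤ ((1 + d) / d) * max ‖u‖ d := by
    have h2 : d ≤ max ‖u‖ d := le_max_right _ _
    have h3 : ‖u‖ ≤ max ‖u‖ d := le_max_left _ _
    rw [div_mul_eq_mul_div, le_div_iff₀ hd]
    nlinarith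
  have hrw : (1 + ‖u‖) ^ (-(3:ℝ)) = ((1 + ‖u‖) ^ (3:ℕ))⁻¹ := by
    rw [Real.rpow_neg (by positivity)]; norm_cast
  rw [Real.norm_eq_abs, abs_of_nonneg (by positivity), hrw]
  have hkey : ((1 + ‖u‖) ^ (3:ℕ)) ≤ ((1 + d) / d) ^ 3 * (max ‖u‖ d) ^ 3 := by
    rw [← mul_pow]
    exact pow_le_pow_left₀ (by positivity) h1 3
  have hB : (0:ℝ) < (1 + ‖u‖) ^ (3:ℕ) := by positivity
  have hA : (0:ℝ) < (max ‖u‖ d) ^ 3 := by positivity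
  rw [← div_eq_mul_inv, le_div_iff₀ hB, inv_mul_le_iff₀ hA]
  linarith [hkey]

lemma cont_aux {d : ℝ} (hd : 0 < d) :
    Continuous fun y : ℝ => y ^ 1 • ((max y d) ^ 3)⁻¹ := by
  refine (continuous_pow 1).smul (Continuous.inv₀ ((continuous_id.max continuous_const).pow 3) ?_)
  intro y; have : 0 < max y d := lt_max_of_lt_right hd; positivity

lemma radial_integral_eq {d : ℝ} (hd : 0 < d) :
    ∫ u : ℂ, ((max ‖u‖ d) ^ 3)⁻¹ = 3 * Real.pi / d := by
  have h := MeasureTheory.integral_fun_norm_addHaar (volume : Measure ℂ)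
    (fun y : ℝ => ((max y d) ^ 3)⁻¹)
  rw [h, Complex.finrank_real_complex, measureReal_def, Complex.volume_ball]
  norm_num
  have hi1 : IntegrableOn (fun y : ℝ => y ^ 1 • ((max y d) ^ 3)⁻¹) (Ioc 0 d) :=
    (cont_aux hd).integrableOn_Ioc
  have hi2 : IntegrableOn (fun y : ℝ => y ^ 1 • ((max y d) ^ 3)⁻¹) (Ioi d) := by
    apply ((integrableOn_Ioi_rpow_of_lt (a := -2) (by norm_num) hd).congr_fun ?_
      measurableSet_Ioi)
    intro y hy
    have hy0 : (0:ℝ) < y := hd.trans hy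
    simp only [smul_eq_mul, max_eq_left (le_of_lt (mem_Ioi.mp hy)), pow_one]
    rw [Real.rpow_neg hy0.le, show ((2:ℝ)) = ((2:ℕ):ℝ) by norm_num, Real.rpow_natCast]
    field_simp
  have hsplit : Ioc (0:ℝ) d ∪ Ioi d = Ioi (0:ℝ) := Ioc_union_Ioi_eq_Ioi hd.le
  have hdisj : Disjoint (Ioc (0:ℝ) d) (Ioi d) := Ioc_disjoint_Ioi le_rfl
  have hunion : ∫ y in Ioi (0:ℝ), y ^ 1 • ((max y d) ^ 3)⁻¹
      = (∫ y in Ioc (0:ℝ) d, y ^ 1 • ((max y d) ^ 3)⁻¹)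
        + ∫ y in Ioi d, y ^ 1 • ((max y d) ^ 3)⁻¹ := by
    rw [← hsplit, setIntegral_union hdisj measurableSet_Ioi hi1 hi2]
  have hI1 : (∫ y in Ioc (0:ℝ) d, y ^ 1 • ((max y d) ^ 3)⁻¹) = 1 / (2 * d) := by
    have : ∀ y ∈ Ioc (0:ℝ) d, y ^ 1 • ((max y d) ^ 3)⁻¹ = y * (d^3)⁻¹ := by
      intro y hy
      rw [max_eq_right hy.2, pow_one, smul_eq_mul]
    rw [setIntegral_congr_fun measurableSet_Ioc this, integral_mul_const,
      ← intervalIntegral.integral_of_le hd.le]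
    simp [integral_id]
    field_simp
  have hI2 : (∫ y in Ioi d, y ^ 1 • ((max y d) ^ 3)⁻¹) = 1 / d := by
    have : ∀ y ∈ Ioi d, y ^ 1 • ((max y d) ^ 3)⁻¹ = y ^ (-2 : ℝ) := by
      intro y hy
      have hy0 : (0:ℝ) < y := hd.trans hy
      simp only [smul_eq_mul, max_eq_left (le_of_lt (mem_Ioi.mp hy)), pow_one]
      rw [Real.rpow_neg hy0.le, show ((2:ℝ)) = ((2:ℕ):ℝ) by norm_num, Real.rpow_natCast]
      field_simp
    rw [setIntegral_congr_fun measurableSet_Ioi this,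
      integral_Ioi_rpow_of_lt (by norm_num) hd]
    rw [show ((-2:ℝ)+1) = -1 by norm_num, Real.rpow_neg_one]
    field_simp
  simp only [pow_one, smul_eq_mul] at hunion hI1 hI2
  rw [hunion, hI1, hI2]
  field_simp
  ring

lemma le_of_maxmul {a m N : ℝ} (hm : 0 ≤ m) (h : max a 1 * m ≤ N) : m ≤ N := by
  calc m = 1 * m := (one_mul m).symm
  _ ≤ max a 1 * m := mul_le_mul_of_nonneg_right (le_max_right _ _) hm
  _ ≤ N := h

lemma ptbound {N : ℝ} {ν : ℂ → ℂ} {z w : ℂ} (hz : ‖z‖ < 1) (hw : 1 < ‖w‖)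
    (h : max ((‖w‖ ^ 2 - 1)⁻¹) 1 * ‖ν w‖ ≤ N) :
    ‖ν w / (w - z) ^ 4‖ ≤ 3 * N * ((max ‖w - z‖ (1 - ‖z‖)) ^ 3)⁻¹ := by
  set m := ‖ν w‖ with hm_def
  have hm : 0 ≤ m := norm_nonneg _
  have ha : 0 < ‖w‖ ^ 2 - 1 := by nlinarith
  have hN1 : m ≤ N := le_of_maxmul hm h
  have hN0 : 0 ≤ N := hm.trans hN1
  have hN2 : m ≤ N * (‖w‖ ^ 2 - 1) := by
    have h2 : (‖w‖ ^ 2 - 1)⁻¹ * m ≤ N :=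
      le_trans (mul_le_mul_of_nonneg_right (le_max_left _ _) hm) h
    have h3 := mul_le_mul_of_nonneg_left h2 ha.le
    rw [← mul_assoc, mul_inv_cancel₀ ha.ne', one_mul] at h3
    linarith
  have hm3 : m ≤ 3 * N * (‖w‖ - 1) := by
    rcases le_or_gt (4/3 : ℝ) ‖w‖ with hcase | hcase
    · nlinarith
    · nlinarith
  have hX1 : ‖w‖ - ‖z‖ ≤ ‖w - z‖ := norm_sub_norm_le w z
  have hXd : 1 - ‖z‖ ≤ ‖w - z‖ := by linarith
  have hX0 : 0 < ‖w - z‖ := by linarith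
  rw [max_eq_left hXd]
  have hmX : m ≤ 3 * N * ‖w - z‖ := by nlinarith
  rw [norm_div, norm_pow]
  rw [div_le_iff₀ (by positivity)]
  have hpow : ((‖w - z‖ ^ 3)⁻¹) * ‖w - z‖ ^ 4 = ‖w - z‖ := by
    rw [show ‖w-z‖^4 = ‖w-z‖^3 * ‖w-z‖ from pow_succ _ 3, ← mul_assoc,
      inv_mul_cancel₀ (by positivity), one_mul]
  calc m ≤ 3 * N * ‖w - z‖ := hmX
  _ = 3 * N * ((‖w - z‖ ^ 3)⁻¹) * ‖w - z‖ ^ 4 := by rw [mul_assoc (3*N), hpow]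

end Aux
section Main

/-- there is an absolute constant `C > 0` such that for every
`ν ∈ L^Z(𝔻*)` (measurable with `max((|w|²−1)⁻¹,1)|ν(w)| ≤ N` a.e. on `𝔻*`),
the function `φ(z) = ∫_{𝔻*} ν(w)/(w−z)⁴ dA(w)` is well-defined (the integrand
is integrable) and holomorphic on `𝔻`, and satisfies
`(1−|z|²)|φ(z)| ≤ C·N` for all `z ∈ 𝔻`; that is, `φ ∈ A^Z(𝔻)`. -/
theorem integral_operator_into_AZ :
    ∃ C : ℝ, 0 < C ∧ ∀ ν : ℂ → ℂ, Measurable ν → ∀ N : ℝ,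
      (∀ᵐ w : ℂ ∂volume, 1 < ‖w‖ →
        max ((‖w‖ ^ 2 - 1)⁻¹) 1 * ‖ν w‖ ≤ N) →
      (∀ z ∈ ball (0:ℂ) 1,
        IntegrableOn (fun w => ν w / (w - z) ^ 4) extDisk volume) ∧
      DifferentiableOn ℂ
        (fun z => ∫ w in extDisk, ν w / (w - z) ^ 4) (ball (0:ℂ) 1) ∧
      ∀ z ∈ ball (0:ℂ) 1,
        (1 - ‖z‖ ^ 2) *
          ‖∫ w in extDisk, ν w / (w - z) ^ 4‖ ≤ C * N := by
  refine ⟨72, by norm_num, fun ν hν N hN => ?_⟩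
  have hmeasE : MeasurableSet extDisk := by
    have : IsOpen extDisk := isOpen_lt continuous_const continuous_norm
    exact this.measurableSet
  -- N is nonnegative
  have hvolE : volume extDisk ≠ 0 := by
    have hsub : ball (2:ℂ) 1 ⊆ extDisk := by
      intro x hx
      rw [mem_ball] at hx
      have h2 : dist x 2 = ‖x - 2‖ := by rw [dist_eq_norm]
      simp only [extDisk, Set.mem_setOf_eq]
      have : ‖(2:ℂ)‖ - ‖x - 2‖ ≤ ‖x‖ := by
        have := norm_sub_norm_le (2:ℂ) (2 - x)
        simpa [norm_sub_rev] using this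
      have h4 : ‖(2:ℂ)‖ = 2 := by norm_num
      nlinarith [hx, h2 ▸ hx]
    intro h0
    have := measure_mono (μ := (volume : Measure ℂ)) hsub
    rw [h0] at this
    have hb := measure_ball_pos volume (2:ℂ) one_pos
    exact absurd (le_antisymm this (by simp)) hb.ne'
  have hN0 : 0 ≤ N := by
    have h1 : ∀ᵐ w ∂(volume.restrict extDisk),
        (1 < ‖w‖ → max ((‖w‖ ^ 2 - 1)⁻¹) 1 * ‖ν w‖ ≤ N) ∧ w ∈ extDisk :=
      (ae_restrict_of_ae hN).and (ae_restrict_mem hmeasE)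
    haveI hne : Filter.NeBot (ae (volume.restrict extDisk)) := by
      rw [ae_neBot]
      intro h0
      exact hvolE (by rwa [Measure.restrict_eq_zero] at h0)
    obtain ⟨w, himp, hmem⟩ := h1.exists
    have hw : 1 < ‖w‖ := by simpa [extDisk] using hmem
    exact le_trans (mul_nonneg (le_trans zero_le_one (le_max_right _ _)) (norm_nonneg _))
      (himp hw)
  -- measurability of the integrand
  have hmeasf : ∀ z : ℂ, AEStronglyMeasurable (fun w => ν w / (w - z) ^ 4)
      (volume.restrict extDisk) := fun z =>
    (hν.div (((measurable_id.sub_const z).pow_const 4))).aestronglyMeasurable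
  -- a.e. bound
  have haeb : ∀ z : ℂ, ‖z‖ < 1 → ∀ᵐ w ∂(volume.restrict extDisk),
      ‖ν w / (w - z) ^ 4‖ ≤ 3 * N * ((max ‖w - z‖ (1 - ‖z‖)) ^ 3)⁻¹ := by
    intro z hz
    filter_upwards [ae_restrict_of_ae hN, ae_restrict_mem hmeasE] with w h1 h2
    have hw : 1 < ‖w‖ := by simpa [extDisk] using h2
    exact ptbound hz hw (h1 hw)
  -- the dominating function is integrable
  have hbint : ∀ z : ℂ, ‖z‖ < 1 →
      Integrable (fun w : ℂ => 3 * N * ((max ‖w - z‖ (1 - ‖z‖)) ^ 3)⁻¹) volume := by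
    intro z hz
    exact ((radial_integrable (by linarith : (0:ℝ) < 1 - ‖z‖)).comp_sub_right z).const_mul
      (3 * N)
  -- part 1: integrability
  have hint : ∀ z ∈ ball (0:ℂ) 1,
      IntegrableOn (fun w => ν w / (w - z) ^ 4) extDisk volume := by
    intro z hz
    rw [mem_ball_zero_iff] at hz
    exact ((hbint z hz).restrict).mono' (hmeasf z) (haeb z hz)
  refine ⟨hint, ?_, ?_⟩
  · -- part 2: differentiability
    intro z0 hz0
    have hz0' : ‖z0‖ < 1 := mem_ball_zero_iff.mp hz0
    set ε : ℝ := (1 - ‖z0‖) / 2 with hε_def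
    have hε : 0 < ε := by rw [hε_def]; linarith
    have hz0ε : ‖z0‖ + ε = 1 - ε := by rw [hε_def]; ring
    have key := hasDerivAt_integral_of_dominated_loc_of_deriv_le
      (μ := volume.restrict extDisk)
      (F := fun z w => ν w / (w - z) ^ 4)
      (F' := fun z w => 4 * (ν w / (w - z) ^ 5))
      (bound := fun w => 128 * N / ε ^ 2 * ((max ‖w - z0‖ ε) ^ 3)⁻¹)
      (x₀ := z0) (ball_mem_nhds z0 hε)
      (Filter.Eventually.of_forall (fun z => hmeasf z))
      (hint z0 hz0)
      (((hν.div (((measurable_id.sub_const z0).pow_const 5))).const_mul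
        (4:ℂ)).aestronglyMeasurable)
      ?_ ?_ ?_
    · exact key.2.differentiableAt.differentiableWithinAt
    · -- bound on the derivative
      filter_upwards [ae_restrict_of_ae hN, ae_restrict_mem hmeasE] with w h1 h2
      intro z hzb
      have hw : 1 < ‖w‖ := by simpa [extDisk] using h2
      have hm : ‖ν w‖ ≤ N := le_of_maxmul (norm_nonneg _) (h1 hw)
      have hzd : ‖z - z0‖ < ε := by rwa [mem_ball, dist_eq_norm] at hzb
      have hz1 : ‖z‖ < 1 - ε := by
        have h3 : ‖z‖ - ‖z0‖ ≤ ‖z - z0‖ := norm_sub_norm_le z z0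
        linarith
      have hXε : ε < ‖w - z‖ := by
        have h3 : ‖w‖ - ‖z‖ ≤ ‖w - z‖ := norm_sub_norm_le w z
        linarith
      have hX0 : (0:ℝ) < ‖w - z‖ := hε.trans hXε
      have hY0 : (0:ℝ) < max ‖w - z0‖ ε := lt_max_of_lt_right hε
      have hY : max ‖w - z0‖ ε ≤ 2 * ‖w - z‖ := by
        apply max_le
        · have h3 : ‖w - z0‖ ≤ ‖w - z‖ + ‖z - z0‖ := by
            have := norm_add_le (w - z) (z - z0)
            simpa [sub_add_sub_cancel] using this
          linarith
        · linarith
      have hY3 : (max ‖w - z0‖ ε) ^ 3 ≤ 8 * ‖w - z‖ ^ 3 := by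
        have h3 := pow_le_pow_left₀ hY0.le hY 3
        rw [mul_pow] at h3
        have h8 : (2:ℝ) ^ 3 = 8 := by norm_num
        rw [h8] at h3
        linarith
      have hnorm : ‖(4:ℂ) * (ν w / (w - z) ^ 5)‖ = 4 * (‖ν w‖ / ‖w - z‖ ^ 5) := by
        rw [norm_mul, norm_div, norm_pow]
        norm_num
      rw [show (4:ℂ) * (ν w / (w - z) ^ 5) = (4:ℂ) * (ν w / (w - z) ^ 5) from rfl] at *
      rw [hnorm, ← div_eq_mul_inv, div_div, mul_div_assoc']
      rw [div_le_div_iff₀ (by positivity) (by positivity)]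
      calc 4 * ‖ν w‖ * (ε ^ 2 * (max ‖w - z0‖ ε) ^ 3)
          ≤ 4 * N * (ε ^ 2 * (max ‖w - z0‖ ε) ^ 3) := by gcongr
        _ ≤ 4 * N * (ε ^ 2 * (8 * ‖w - z‖ ^ 3)) := by gcongr
        _ = 32 * N * (ε ^ 2 * ‖w - z‖ ^ 3) := by ring
        _ ≤ 32 * N * (‖w - z‖ ^ 2 * ‖w - z‖ ^ 3) := by
            have h5 : ε ^ 2 ≤ ‖w - z‖ ^ 2 := pow_le_pow_left₀ hε.le hXε.le 2
            gcongr
        _ = 32 * N * ‖w - z‖ ^ 5 := by ring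
        _ ≤ 128 * N * ‖w - z‖ ^ 5 := by nlinarith [hN0, pow_nonneg hX0.le 5]
    · -- integrability of the bound
      exact (((radial_integrable hε).comp_sub_right z0).const_mul (128 * N / ε ^ 2)).restrict
    · -- differentiability of the integrand
      filter_upwards [ae_restrict_mem hmeasE] with w h2
      intro z hzb
      have hw : 1 < ‖w‖ := by simpa [extDisk] using h2
      have hzd : ‖z - z0‖ < ε := by rwa [mem_ball, dist_eq_norm] at hzb
      have hz1 : ‖z‖ < 1 - ε := by
        have h3 : ‖z‖ - ‖z0‖ ≤ ‖z - z0‖ := norm_sub_norm_le z z0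
        linarith
      have hXε : ε < ‖w - z‖ := by
        have h3 : ‖w‖ - ‖z‖ ≤ ‖w - z‖ := norm_sub_norm_le w z
        linarith
      have hne : w - z ≠ 0 := norm_pos_iff.mp (hε.trans hXε)
      have h1 : HasDerivAt (fun z : ℂ => w - z) (-1) z := (hasDerivAt_id z).const_sub w
      have h2p := h1.pow 4
      have h3 := h2p.inv (pow_ne_zero 4 hne)
      have h4 := HasDerivAt.const_mul (ν w) h3
      simp only [div_eq_mul_inv]
      refine h4.congr_deriv ?_
      simp only [Pi.pow_apply]
      field_simp
      ring
  · -- part 3: the bound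
    intro z hz
    rw [mem_ball_zero_iff] at hz
    set d : ℝ := 1 - ‖z‖ with hd_def
    have hd : 0 < d := by simp only [hd_def]; linarith
    have hval : ‖∫ w in extDisk, ν w / (w - z) ^ 4‖ ≤ 3 * N * (3 * Real.pi / d) := by
      calc ‖∫ w in extDisk, ν w / (w - z) ^ 4‖
          ≤ ∫ w in extDisk, ‖ν w / (w - z) ^ 4‖ := norm_integral_le_integral_norm _
      _ ≤ ∫ w in extDisk, 3 * N * ((max ‖w - z‖ d) ^ 3)⁻¹ := by
          apply integral_mono_ae ((hint z (by rwa [mem_ball_zero_iff])).norm)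
            ((hbint z hz).restrict) (haeb z hz)
      _ ≤ ∫ w : ℂ, 3 * N * ((max ‖w - z‖ d) ^ 3)⁻¹ := by
          apply setIntegral_le_integral (hbint z hz)
          filter_upwards with w
          have : 0 < max ‖w - z‖ d := lt_max_of_lt_right hd
          positivity
      _ = 3 * N * ∫ w : ℂ, ((max ‖w - z‖ d) ^ 3)⁻¹ := integral_const_mul _ _
      _ = 3 * N * ∫ u : ℂ, ((max ‖u‖ d) ^ 3)⁻¹ := by
          rw [integral_sub_right_eq_self (fun u : ℂ => ((max ‖u‖ d) ^ 3)⁻¹) z]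
      _ = 3 * N * (3 * Real.pi / d) := by rw [radial_integral_eq hd]
    have hVd : ‖∫ w in extDisk, ν w / (w - z) ^ 4‖ * d ≤ 9 * Real.pi * N := by
      rw [← le_div_iff₀ hd]
      calc ‖∫ w in extDisk, ν w / (w - z) ^ 4‖ ≤ 3 * N * (3 * Real.pi / d) := hval
      _ = 9 * Real.pi * N / d := by ring
    have hVnn : 0 ≤ ‖∫ w in extDisk, ν w / (w - z) ^ 4‖ := norm_nonneg _
    have hznn : 0 ≤ ‖z‖ := norm_nonneg _
    have hpi : Real.pi ≤ 4 := Real.pi_le_four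
    have hpi0 : 0 < Real.pi := Real.pi_pos
    nlinarith [mul_nonneg (sq_nonneg (1 - ‖z‖)) hVnn, hVd,
      mul_nonneg hN0 (by linarith : (0:ℝ) ≤ 4 - Real.pi), hpi0.le, hN0]

end Main
end

section
/- For every ν ∈ L^Z_0(𝔻*), the holomorphic function φ(z) = ∫_{𝔻*} ν(w)/(w − z)⁴ dA(w) on 𝔻 satisfies lim_{|z|→1} (1−|z|²)|φ(z)| = 0; that is, φ ∈ A^Z_0(𝔻). -/
set_option maxHeartbeats 1000000


open MeasureTheory Metric

/-- `ν ∈ L^Z(𝔻*)`: measurable with finite Z-norm. -/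
def memLZ (ν : ℂ → ℂ) : Prop :=
  Measurable ν ∧ ∃ C : ℝ, ∀ᵐ w : ℂ ∂volume, 1 < ‖w‖ →
    max ((‖w‖ ^ 2 - 1)⁻¹) 1 * ‖ν w‖ ≤ C

/-- The little Zygmund condition:
`lim_{t→0} ess sup_{1<|w|<1+t} (|w|²−1)⁻¹ |ν(w)| = 0`. -/
def littleLZ (ν : ℂ → ℂ) : Prop :=
  ∀ ε : ℝ, 0 < ε → ∃ t : ℝ, 0 < t ∧ ∀ᵐ w : ℂ ∂volume,
    1 < ‖w‖ → ‖w‖ < 1 + t →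
      (‖w‖ ^ 2 - 1)⁻¹ * ‖ν w‖ ≤ ε

section Aux

open Set Filter

private lemma ftc1 (δ : ℝ) (hδ : 0 < δ) :
    ∫ s in Set.Ioi δ, (s - δ) / s ^ 3 = 1 / (2 * δ) := by
  have hF : ∀ x ∈ Set.Ici δ, HasDerivAt (fun s : ℝ => -s⁻¹ + δ / 2 * (s ^ 2)⁻¹)
      ((x - δ) / x ^ 3) x := by
    intro x hx
    have hxδ : δ ≤ x := hx
    have hx0 : x ≠ 0 := by nlinarith
    have h1 : HasDerivAt (fun s : ℝ => -s⁻¹) (-(-(x ^ 2)⁻¹)) x := (hasDerivAt_inv hx0).neg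
    have h2 : HasDerivAt (fun s : ℝ => (s ^ 2)⁻¹) (-(2 * x) / (x ^ 2) ^ 2) x := by
      have := ((hasDerivAt_pow 2 x)).inv (pow_ne_zero 2 hx0)
      simpa [Pi.inv_def] using this
    have h3 := h1.add (h2.const_mul (δ / 2))
    refine h3.congr_deriv ?_
    field_simp
    ring
  have hpos : ∀ x ∈ Set.Ioi δ, 0 ≤ (x - δ) / x ^ 3 := by
    intro x hx
    have hx' : δ < x := hx
    have h0 : (0:ℝ) < x := hδ.trans hx'
    exact div_nonneg (by linarith) (by positivity)
  have hlim : Tendsto (fun s : ℝ => -s⁻¹ + δ / 2 * (s ^ 2)⁻¹) atTop (nhds 0) := by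
    have h1 : Tendsto (fun s : ℝ => -s⁻¹) atTop (nhds (-0)) :=
      (tendsto_inv_atTop_zero (𝕜 := ℝ)).neg
    have h2 : Tendsto (fun s : ℝ => δ / 2 * (s ^ 2)⁻¹) atTop (nhds (δ / 2 * 0)) :=
      ((tendsto_pow_atTop (by norm_num)).inv_tendsto_atTop).const_mul _
    simpa using h1.add h2
  rw [integral_Ioi_of_hasDerivAt_of_nonneg' hF hpos hlim]
  field_simp
  ring

private lemma ftc2 (t : ℝ) (ht : 0 < t) :
    ∫ s in Set.Ioi t, (s ^ 3)⁻¹ = 1 / (2 * t ^ 2) := by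
  have hF : ∀ x ∈ Set.Ici t, HasDerivAt (fun s : ℝ => -(2 * s ^ 2)⁻¹) ((x ^ 3)⁻¹) x := by
    intro x hx
    have hxt : t ≤ x := hx
    have hx0 : (0:ℝ) < x := lt_of_lt_of_le ht hxt
    have h2 : HasDerivAt (fun s : ℝ => (2 * s ^ 2)) (2 * (2 * x)) x := by
      simpa using ((hasDerivAt_pow 2 x)).const_mul 2
    have h3 := (h2.inv (by positivity)).neg
    refine h3.congr_deriv ?_
    field_simp
  have hpos : ∀ x ∈ Set.Ioi t, 0 ≤ (x ^ 3)⁻¹ := by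
    intro x hx
    have hx' : t < x := hx
    have : (0:ℝ) < x := ht.trans hx'
    positivity
  have hlim : Tendsto (fun s : ℝ => -(2 * s ^ 2)⁻¹) atTop (nhds 0) := by
    have h2 : Tendsto (fun s : ℝ => (2 * s ^ 2)) atTop atTop :=
      (tendsto_pow_atTop (by norm_num)).const_mul_atTop (by norm_num)
    simpa using h2.inv_tendsto_atTop.neg
  rw [integral_Ioi_of_hasDerivAt_of_nonneg' hF hpos hlim]
  have ht2 : t ^ 2 ≠ 0 := by positivity
  field_simp
  ring

private lemma integral_radial (f : ℝ → ℝ) :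
    ∫ w : ℂ, f (‖w‖) = (2 * Real.pi) * ∫ s in Set.Ioi (0:ℝ), s * f s := by
  have h := MeasureTheory.integral_fun_norm_addHaar (volume : Measure ℂ) f
  simp only [Complex.finrank_real_complex, Measure.real, Complex.volume_ball] at h
  rw [h]
  norm_num [ENNReal.toReal_mul, smul_eq_mul, two_smul]
  ring

private lemma integrable_bracket (z : ℂ) (K : ℝ) :
    Integrable (fun w : ℂ => K * (1 + ‖w - z‖) ^ (-(3:ℝ))) := by
  have h : Integrable (fun w : ℂ => (1 + ‖w‖) ^ (-(3:ℝ))) := by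
    apply integrable_one_add_norm (E := ℂ)
    rw [Complex.finrank_real_complex]; norm_num
  simpa using (h.comp_sub_right z).const_mul K

private lemma rpow_neg3 (s : ℝ) (hs : 0 ≤ s) : (1 + s) ^ (-(3:ℝ)) = ((1 + s) ^ (3:ℕ))⁻¹ := by
  rw [← Real.rpow_natCast (1 + s) 3, ← Real.rpow_neg (by linarith)]
  norm_num

private lemma cube_bound (a s : ℝ) (ha : 0 < a) (hs : a < s) :
    (s ^ (3:ℕ))⁻¹ ≤ (1 + 1/a) ^ (3:ℕ) * ((1 + s) ^ (3:ℕ))⁻¹ := by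
  have hs0 : 0 < s := ha.trans hs
  have h1 : (1 + s) ≤ (1 + 1/a) * s := by
    have : (1:ℝ) ≤ s / a := (one_le_div ha).2 hs.le
    have : (1:ℝ) ≤ 1/a * s := by rw [one_div, inv_mul_eq_div]; linarith
    nlinarith
  have hcube : (1 + s) ^ (3:ℕ) ≤ ((1 + 1/a) * s) ^ (3:ℕ) :=
    pow_le_pow_left₀ (by linarith) h1 3
  rw [← div_eq_mul_inv, le_div_iff₀ (by positivity), inv_mul_eq_div,
    div_le_iff₀ (by positivity)]
  calc (1 + s) ^ (3:ℕ) ≤ ((1 + 1/a) * s) ^ (3:ℕ) := hcube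
    _ = (1 + 1/a) ^ (3:ℕ) * s ^ (3:ℕ) := by ring

private lemma abs_meas (z : ℂ) : Measurable fun w : ℂ => ‖w - z‖ :=
  continuous_norm.measurable.comp (measurable_id.sub_const z)

private lemma g1_pkg (c δ : ℝ) (hc : 0 ≤ c) (hδ : 0 < δ) (z : ℂ) :
    Integrable (fun w : ℂ => c * max (‖w - z‖ - δ) 0 / ‖w - z‖ ^ 4) ∧
    ∫ w : ℂ, c * max (‖w - z‖ - δ) 0 / ‖w - z‖ ^ 4
      = Real.pi * c / δ := by
  set f : ℝ → ℝ := fun s => c * max (s - δ) 0 / s ^ 4 with hf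
  have fnonneg : ∀ s : ℝ, 0 ≤ f s := fun s =>
    div_nonneg (mul_nonneg hc (le_max_right _ _)) (by positivity)
  have fbd : ∀ s : ℝ, 0 ≤ s → f s ≤ c * (1 + 1/δ) ^ (3:ℕ) * (1 + s) ^ (-(3:ℝ)) := by
    intro s hs
    rw [rpow_neg3 s hs]
    rcases le_or_gt s δ with h | h
    · have hmax : max (s - δ) 0 = 0 := max_eq_right (by linarith)
      rw [hf]; simp only [hmax, mul_zero, zero_div]
      positivity
    · have hs0 : 0 < s := hδ.trans h
      have hmax : max (s - δ) 0 = s - δ := max_eq_left (by linarith)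
      have hA : c * (s - δ) / s ^ 4 ≤ c * (s ^ (3:ℕ))⁻¹ := by
        rw [div_le_iff₀ (by positivity)]
        have : (s ^ (3:ℕ))⁻¹ * s ^ 4 = s := by
          field_simp
        nlinarith [pow_pos hs0 3, pow_pos hs0 4, mul_nonneg hc hδ.le,
          mul_nonneg (mul_nonneg hc hδ.le) (pow_pos hs0 3).le]
      have hB := cube_bound δ s hδ h
      calc f s = c * (s - δ) / s ^ 4 := by rw [hf]; simp [hmax]
        _ ≤ c * (s ^ (3:ℕ))⁻¹ := hA
        _ ≤ c * ((1 + 1/δ) ^ (3:ℕ) * ((1 + s) ^ (3:ℕ))⁻¹) :=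
            mul_le_mul_of_nonneg_left hB hc
        _ = c * (1 + 1/δ) ^ (3:ℕ) * ((1 + s) ^ (3:ℕ))⁻¹ := by ring
  have hmeas : Measurable fun w : ℂ => f (‖w - z‖) := by
    exact ((((abs_meas z).sub_const δ).max measurable_const).const_mul c).div
      ((abs_meas z).pow_const 4)
  constructor
  · apply Integrable.mono' (integrable_bracket z (c * (1 + 1/δ) ^ (3:ℕ)))
      hmeas.aestronglyMeasurable
    filter_upwards with w
    rw [Real.norm_of_nonneg (fnonneg _)]
    exact fbd _ (norm_nonneg _)
  · have h1 : ∫ w : ℂ, f (‖w - z‖) = ∫ w : ℂ, f (‖w‖) :=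
      integral_sub_right_eq_self (fun w : ℂ => f (‖w‖)) z
    rw [h1, integral_radial]
    have h2 : ∫ s in Set.Ioi (0:ℝ), s * f s
        = ∫ s in Set.Ioi (0:ℝ), Set.indicator (Set.Ioi δ) (fun s => c * ((s - δ) / s ^ 3)) s := by
      apply setIntegral_congr_fun measurableSet_Ioi
      intro s hs
      have hs0 : (0:ℝ) < s := hs
      rcases le_or_gt s δ with h | h
      · have hmax : max (s - δ) 0 = 0 := max_eq_right (by linarith)
        rw [Set.indicator_of_notMem (by simpa using h)]
        rw [hf]; simp [hmax]
      · have hmax : max (s - δ) 0 = s - δ := max_eq_left (by linarith)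
        rw [Set.indicator_of_mem (by simpa using h)]
        rw [hf]; simp only [hmax]
        field_simp
    rw [h2, setIntegral_indicator measurableSet_Ioi, Set.Ioi_inter_Ioi,
      sup_eq_right.2 hδ.le, integral_const_mul, ftc1 δ hδ]
    field_simp

private lemma g2_pkg (c t : ℝ) (hc : 0 ≤ c) (ht : 0 < t) (z : ℂ) :
    Integrable (fun w : ℂ =>
      if t < ‖w - z‖ then c / ‖w - z‖ ^ 4 else 0) ∧
    ∫ w : ℂ, (if t < ‖w - z‖ then c / ‖w - z‖ ^ 4 else 0)
      = Real.pi * c / t ^ 2 := by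
  set f : ℝ → ℝ := fun s => if t < s then c / s ^ 4 else 0 with hf
  have fnonneg : ∀ s : ℝ, 0 ≤ f s := by
    intro s; simp only [hf]
    split <;> positivity
  have fbd : ∀ s : ℝ, 0 ≤ s → f s ≤ (c / t) * (1 + 1/t) ^ (3:ℕ) * (1 + s) ^ (-(3:ℝ)) := by
    intro s hs
    simp only [hf, rpow_neg3 s hs]
    split
    next h =>
      have hs0 : 0 < s := ht.trans h
      have hA : c / s ^ 4 ≤ (c / t) * (s ^ (3:ℕ))⁻¹ := by
        rw [div_le_iff₀ (by positivity)]
        have e : (s ^ (3:ℕ))⁻¹ * s ^ 4 = s := by field_simp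
        calc c = c / t * t := by field_simp
          _ ≤ c / t * s := mul_le_mul_of_nonneg_left h.le (by positivity)
          _ = c / t * ((s ^ (3:ℕ))⁻¹ * s ^ 4) := by rw [e]
          _ = c / t * (s ^ (3:ℕ))⁻¹ * s ^ 4 := by ring
      have hB := cube_bound t s ht h
      calc c / s ^ 4 ≤ (c / t) * (s ^ (3:ℕ))⁻¹ := hA
        _ ≤ (c / t) * ((1 + 1/t) ^ (3:ℕ) * ((1 + s) ^ (3:ℕ))⁻¹) :=
            mul_le_mul_of_nonneg_left hB (by positivity)
        _ = (c / t) * (1 + 1/t) ^ (3:ℕ) * ((1 + s) ^ (3:ℕ))⁻¹ := by ring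
    next => positivity
  have hmeas : Measurable fun w : ℂ => f (‖w - z‖) := by
    apply Measurable.ite
    · exact measurableSet_lt measurable_const (abs_meas z)
    · exact (measurable_const.div ((abs_meas z).pow_const 4))
    · exact measurable_const
  constructor
  · apply Integrable.mono' (integrable_bracket z ((c / t) * (1 + 1/t) ^ (3:ℕ)))
      hmeas.aestronglyMeasurable
    filter_upwards with w
    rw [Real.norm_of_nonneg (fnonneg _)]
    exact fbd _ (norm_nonneg _)
  · have h1 : ∫ w : ℂ, f (‖w - z‖) = ∫ w : ℂ, f (‖w‖) :=
      integral_sub_right_eq_self (fun w : ℂ => f (‖w‖)) z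
    show (∫ w : ℂ, f (‖w - z‖)) = _
    rw [h1, integral_radial]
    have h2 : ∫ s in Set.Ioi (0:ℝ), s * f s
        = ∫ s in Set.Ioi (0:ℝ), Set.indicator (Set.Ioi t) (fun s => c * (s ^ 3)⁻¹) s := by
      apply setIntegral_congr_fun measurableSet_Ioi
      intro s hs
      have hs0 : (0:ℝ) < s := hs
      simp only [hf]
      rcases le_or_gt s t with h | h
      · rw [Set.indicator_of_notMem (by simpa using h)]
        simp [not_lt.2 h]
      · rw [Set.indicator_of_mem (by simpa using h), if_pos h]
        field_simp
    rw [h2, setIntegral_indicator measurableSet_Ioi, Set.Ioi_inter_Ioi,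
      sup_eq_right.2 ht.le, integral_const_mul, ftc2 t ht]
    field_simp

private lemma extDisk_meas : MeasurableSet extDisk :=
  (isOpen_lt continuous_const continuous_norm).measurableSet

private lemma main_bound (ν : ℂ → ℂ) (c₁ c₂ t : ℝ) (hc₁ : 0 ≤ c₁) (hc₂ : 0 ≤ c₂)
    (ht : 0 < t) (ht1 : t ≤ 1)
    (h₁ : ∀ᵐ w : ℂ, 1 < ‖w‖ → ‖w‖ < 1 + t →
      ‖ν w‖ ≤ c₁ * (‖w‖ ^ 2 - 1))
    (h₂ : ∀ᵐ w : ℂ, 1 + t ≤ ‖w‖ → ‖ν w‖ ≤ c₂)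
    (z : ℂ) (hz : ‖z‖ < 1) :
    ‖∫ w in extDisk, ν w / (w - z) ^ 4‖ ≤
      3 * Real.pi * c₁ / (1 - ‖z‖) + Real.pi * c₂ / t ^ 2 := by
  set δ := 1 - ‖z‖ with hδdef
  have hδ : 0 < δ := by rw [hδdef]; linarith
  set G₁ : ℂ → ℝ :=
    fun w => 3 * c₁ * max (‖w - z‖ - δ) 0 / ‖w - z‖ ^ 4 with hG₁
  set G₂ : ℂ → ℝ :=
    fun w => if t < ‖w - z‖ then c₂ / ‖w - z‖ ^ 4 else 0 with hG₂
  obtain ⟨hG₁i, hG₁v⟩ := g1_pkg (3 * c₁) δ (by linarith) hδ z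
  obtain ⟨hG₂i, hG₂v⟩ := g2_pkg c₂ t hc₂ ht z
  have hG₁0 : ∀ w, 0 ≤ G₁ w := fun w => by
    simp only [hG₁]
    exact div_nonneg (mul_nonneg (by linarith) (le_max_right _ _)) (by positivity)
  have hG₂0 : ∀ w, 0 ≤ G₂ w := fun w => by
    simp only [hG₂]; split <;> positivity
  have step1 : ‖∫ w in extDisk, ν w / (w - z) ^ 4‖
      ≤ ∫ w : ℂ, Set.indicator extDisk
          (fun w => ‖ν w‖ / ‖w - z‖ ^ 4) w := by
    rw [integral_indicator extDisk_meas]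
    calc ‖∫ w in extDisk, ν w / (w - z) ^ 4‖
        ≤ ∫ w in extDisk, ‖ν w / (w - z) ^ 4‖ := by
          exact norm_integral_le_integral_norm _
      _ = ∫ w in extDisk, ‖ν w‖ / ‖w - z‖ ^ 4 := by
          apply integral_congr_ae
          filter_upwards with w
          simp [map_div₀, map_pow]
  have step2 : ∀ᵐ w : ℂ,
      Set.indicator extDisk (fun w => ‖ν w‖ / ‖w - z‖ ^ 4) w
        ≤ G₁ w + G₂ w := by
    filter_upwards [h₁, h₂] with w hw₁ hw₂
    rcases em (w ∈ extDisk) with hw | hw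
    · rw [Set.indicator_of_mem hw]
      have hw1 : 1 < ‖w‖ := hw
      have hsge : ‖w‖ - ‖z‖ ≤ ‖w - z‖ := by
        simpa using norm_sub_norm_le w z
      have hsδ : δ < ‖w - z‖ := by rw [hδdef]; linarith
      have hs0 : 0 < ‖w - z‖ := hδ.trans hsδ
      rcases lt_or_ge (‖w‖) (1 + t) with hcase | hcase
      · have hν : ‖ν w‖ ≤ c₁ * (‖w‖ ^ 2 - 1) := hw₁ hw1 hcase
        have key : ‖ν w‖ ≤ 3 * c₁ * max (‖w - z‖ - δ) 0 := by
          have h1 : ‖w‖ ^ 2 - 1 ≤ 3 * (‖w‖ - 1) := by nlinarith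
          have h2 : ‖w‖ - 1 ≤ ‖w - z‖ - δ := by
            rw [hδdef]; linarith
          have h3 : ‖w - z‖ - δ ≤ max (‖w - z‖ - δ) 0 :=
            le_max_left _ _
          calc ‖ν w‖ ≤ c₁ * (‖w‖ ^ 2 - 1) := hν
            _ ≤ c₁ * (3 * (‖w‖ - 1)) := mul_le_mul_of_nonneg_left h1 hc₁
            _ ≤ c₁ * (3 * max (‖w - z‖ - δ) 0) := by
                apply mul_le_mul_of_nonneg_left _ hc₁
                have := h2.trans h3; linarith
            _ = 3 * c₁ * max (‖w - z‖ - δ) 0 := by ring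
        have hle : ‖ν w‖ / ‖w - z‖ ^ 4 ≤ G₁ w := by
          simp only [hG₁]
          exact (div_le_div_iff_of_pos_right (pow_pos hs0 4)).2 key
        linarith [hG₂0 w]
      · have hν : ‖ν w‖ ≤ c₂ := hw₂ hcase
        have hst : t < ‖w - z‖ := by
          have : 1 + t - ‖z‖ ≤ ‖w - z‖ := by linarith
          have hz0 : 0 ≤ ‖z‖ := norm_nonneg z
          linarith
        have hle : ‖ν w‖ / ‖w - z‖ ^ 4 ≤ G₂ w := by
          simp only [hG₂, if_pos hst]
          exact (div_le_div_iff_of_pos_right (pow_pos hs0 4)).2 hν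
        linarith [hG₁0 w]
    · rw [Set.indicator_of_notMem hw]
      exact add_nonneg (hG₁0 w) (hG₂0 w)
  have step3 : ∫ w : ℂ, Set.indicator extDisk
      (fun w => ‖ν w‖ / ‖w - z‖ ^ 4) w
        ≤ ∫ w : ℂ, (G₁ w + G₂ w) := by
    apply integral_mono_of_nonneg _ (hG₁i.add hG₂i) step2
    filter_upwards with w
    apply Set.indicator_nonneg
    intro x _
    positivity
  have step4 : ∫ w : ℂ, (G₁ w + G₂ w)
      = 3 * Real.pi * c₁ / δ + Real.pi * c₂ / t ^ 2 := by
    rw [integral_add hG₁i hG₂i, hG₁v, hG₂v]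
    ring_nf
  linarith [step1.trans (step3.trans_eq step4)]

end Aux

/-- for `ν ∈ L^Z_0(𝔻*)`, the holomorphic function
`φ(z) = ∫_{𝔻*} ν(w)/(w−z)⁴ dA(w)` on `𝔻` satisfies
`lim_{|z|→1} (1−|z|²)|φ(z)| = 0`; that is, `φ ∈ A^Z_0(𝔻)`. -/
theorem integral_operator_into_littleAZ (ν : ℂ → ℂ)
    (hν : memLZ ν) (hν0 : littleLZ ν) :
    (∃ C : ℝ, ∀ z ∈ ball (0:ℂ) 1,
      (1 - ‖z‖ ^ 2) *
        ‖∫ w in extDisk, ν w / (w - z) ^ 4‖ ≤ C) ∧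
    (∀ ε : ℝ, 0 < ε → ∃ t : ℝ, 0 < t ∧ ∀ z : ℂ,
      1 - t < ‖z‖ → ‖z‖ < 1 →
        (1 - ‖z‖ ^ 2) *
          ‖∫ w in extDisk, ν w / (w - z) ^ 4‖ ≤ ε) := by
  obtain ⟨hmeas, C, hC⟩ := hν
  set C' : ℝ := max C 0 with hC'def
  have hC'0 : 0 ≤ C' := le_max_right _ _
  have hπ : 0 < Real.pi := Real.pi_pos
  -- the two a.e. hypotheses in reusable form
  have hbig : ∀ᵐ w : ℂ ∂volume, 1 < ‖w‖ → ‖ν w‖ ≤ C' := by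
    filter_upwards [hC] with w hw hw1
    have h := hw hw1
    have h1 : ‖ν w‖
        ≤ max ((‖w‖ ^ 2 - 1)⁻¹) 1 * ‖ν w‖ := by
      nlinarith [le_max_right ((‖w‖ ^ 2 - 1)⁻¹) 1, norm_nonneg (ν w)]
    calc ‖ν w‖ ≤ _ := h1
      _ ≤ C := h
      _ ≤ C' := le_max_left _ _
  have hsmall : ∀ᵐ w : ℂ ∂volume, 1 < ‖w‖ →
      ‖ν w‖ ≤ C' * (‖w‖ ^ 2 - 1) := by
    filter_upwards [hC] with w hw hw1
    have h := hw hw1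
    have hx : 0 < ‖w‖ ^ 2 - 1 := by nlinarith
    have h1 : (‖w‖ ^ 2 - 1)⁻¹ * ‖ν w‖
        ≤ max ((‖w‖ ^ 2 - 1)⁻¹) 1 * ‖ν w‖ :=
      mul_le_mul_of_nonneg_right (le_max_left _ _) (norm_nonneg _)
    have h2 : (‖w‖ ^ 2 - 1)⁻¹ * ‖ν w‖ ≤ C' :=
      (h1.trans h).trans (le_max_left _ _)
    rw [inv_mul_le_iff₀ hx] at h2
    linarith [h2]
  constructor
  · -- part 1 : uniform bound, use t = 1
    refine ⟨7 * Real.pi * C', fun z hz => ?_⟩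
    have hz1 : ‖z‖ < 1 := by
      simpa using mem_ball_zero_iff.1 hz
    have h₁ : ∀ᵐ w : ℂ ∂volume, 1 < ‖w‖ → ‖w‖ < 1 + 1 →
        ‖ν w‖ ≤ C' * (‖w‖ ^ 2 - 1) := by
      filter_upwards [hsmall] with w hw hw1 _
      exact hw hw1
    have h₂ : ∀ᵐ w : ℂ ∂volume, 1 + 1 ≤ ‖w‖ → ‖ν w‖ ≤ C' := by
      filter_upwards [hbig] with w hw hw1
      exact hw (by linarith)
    have hmain := main_bound ν C' C' 1 hC'0 hC'0 one_pos le_rfl h₁ h₂ z hz1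
    set a := ‖z‖ with ha
    set B := ‖∫ w in extDisk, ν w / (w - z) ^ 4‖ with hB
    have ha0 : 0 ≤ a := norm_nonneg z
    have hδ : 0 < 1 - a := by linarith
    have hB0 : 0 ≤ B := norm_nonneg _
    have hQδ : 3 * Real.pi * C' / (1 - a) * (1 - a) = 3 * Real.pi * C' := by
      field_simp
    have hQ0 : 0 ≤ 3 * Real.pi * C' / (1 - a) := by positivity
    have hqle : (1 - a ^ 2) ≤ 2 * (1 - a) := by nlinarith
    have hq0 : 0 ≤ 1 - a ^ 2 := by nlinarith
    have hq1 : 1 - a ^ 2 ≤ 1 := by nlinarith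
    have hRsimp : Real.pi * C' / 1 ^ 2 = Real.pi * C' := by norm_num
    rw [hRsimp] at hmain
    have hmul : (1 - a ^ 2) * B
        ≤ (1 - a ^ 2) * (3 * Real.pi * C' / (1 - a) + Real.pi * C') :=
      mul_le_mul_of_nonneg_left hmain hq0
    have hPC : 0 ≤ Real.pi * C' := by positivity
    have e1 : (1 - a ^ 2) * (3 * Real.pi * C' / (1 - a))
        ≤ 2 * (1 - a) * (3 * Real.pi * C' / (1 - a)) :=
      mul_le_mul_of_nonneg_right hqle hQ0
    have e3 : (1 - a ^ 2) * (Real.pi * C') ≤ 1 * (Real.pi * C') :=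
      mul_le_mul_of_nonneg_right hq1 hPC
    nlinarith [hmul, e1, e3, hQδ, hPC]
  · -- part 2 : little-o
    intro ε hε
    set ε₁ : ℝ := ε / (12 * Real.pi) with hε₁def
    have hε₁ : 0 < ε₁ := by positivity
    obtain ⟨t₀, ht₀, hae⟩ := hν0 ε₁ hε₁
    set t₁ : ℝ := min t₀ 1 with ht₁def
    have ht₁ : 0 < t₁ := lt_min ht₀ one_pos
    have ht₁1 : t₁ ≤ 1 := min_le_right _ _
    have h₁ : ∀ᵐ w : ℂ ∂volume, 1 < ‖w‖ → ‖w‖ < 1 + t₁ →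
        ‖ν w‖ ≤ ε₁ * (‖w‖ ^ 2 - 1) := by
      filter_upwards [hae] with w hw hw1 hw2
      have hx : 0 < ‖w‖ ^ 2 - 1 := by nlinarith
      have h2 := hw hw1 (by have : t₁ ≤ t₀ := min_le_left _ _; linarith)
      rw [inv_mul_le_iff₀ hx] at h2
      linarith [h2]
    have h₂ : ∀ᵐ w : ℂ ∂volume, 1 + t₁ ≤ ‖w‖ → ‖ν w‖ ≤ C' := by
      filter_upwards [hbig] with w hw hw1
      exact hw (by linarith)
    refine ⟨ε * t₁ ^ 2 / (4 * Real.pi * C' + 1), by positivity, fun z hz1 hz2 => ?_⟩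
    set t := ε * t₁ ^ 2 / (4 * Real.pi * C' + 1) with htdef
    have hmain := main_bound ν ε₁ C' t₁ hε₁.le hC'0 ht₁ ht₁1 h₁ h₂ z hz2
    set a := ‖z‖ with ha
    set B := ‖∫ w in extDisk, ν w / (w - z) ^ 4‖ with hB
    have ha0 : 0 ≤ a := norm_nonneg z
    have hδ : 0 < 1 - a := by linarith
    have hδt : 1 - a < t := by rw [htdef]; linarith
    have hB0 : 0 ≤ B := norm_nonneg _
    set P := 3 * Real.pi * ε₁ / (1 - a) with hP
    set R := Real.pi * C' / t₁ ^ 2 with hR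
    have hP0 : 0 ≤ P := by rw [hP]; positivity
    have hR0 : 0 ≤ R := by rw [hR]; positivity
    have hq0 : 0 ≤ 1 - a ^ 2 := by nlinarith
    have hqle : (1 - a ^ 2) ≤ 2 * (1 - a) := by nlinarith
    have hmul : (1 - a ^ 2) * B ≤ 2 * (1 - a) * (P + R) :=
      le_trans (mul_le_mul_of_nonneg_left hmain hq0)
        (mul_le_mul_of_nonneg_right hqle (by linarith))
    have hPδ : 2 * (1 - a) * P = 6 * Real.pi * ε₁ := by
      rw [hP]; field_simp; ring
    have hε₁val : 6 * Real.pi * ε₁ = ε / 2 := by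
      rw [hε₁def]; field_simp; ring
    have hRt : 2 * t * R = 2 * Real.pi * C' * ε / (4 * Real.pi * C' + 1) := by
      rw [hR, htdef]
      have : t₁ ^ 2 ≠ 0 := by positivity
      field_simp
    have hRbound : 2 * (1 - a) * R ≤ ε / 2 := by
      have h0 : (0:ℝ) ≤ R * (t - (1 - a)) :=
        mul_nonneg hR0 (by linarith)
      have h1 : 2 * (1 - a) * R ≤ 2 * t * R := by nlinarith [h0]
      have h1' : 2 * (1 - a) * R ≤ 2 * Real.pi * C' * ε / (4 * Real.pi * C' + 1) :=
        h1.trans_eq hRt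
      have h2 : 2 * Real.pi * C' * ε / (4 * Real.pi * C' + 1) ≤ ε / 2 := by
        rw [div_le_iff₀ (by positivity)]
        nlinarith [mul_nonneg (mul_nonneg hπ.le hC'0) hε.le]
      linarith [h1', h2]
    nlinarith [hmul, hPδ, hε₁val, hRbound]
end
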